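/- arXiv:1702.05560 — 4 statements merged into one kernel-verified Lean document; each statement's English description precedes it below -/
import Mathlib

section
/- Let (Ω, Σ, μ, S) be a dynamical system which is asymptotically stationary, and let Π ⊂ Σ be a π-system generating Σ such that lim_{k→∞} sup_{i∈ℕ} |μ(S^{-i}A ∩ S^{-k}S^{-i}B) − μ(S^{-i}A)μ(S^{-k}S^{-i}B)| = 0 for all A, B ∈ Π. Then this limit condition holds for all A, B ∈ Σ. -/
open MeasureTheory Filter Set

namespace Stmt4Aux

variable {Ω : Type*} [MeasurableSpace Ω] (μ : Measure Ω) [IsProbabilityMeasure μ]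

/-- correlation-type quantity -/
noncomputable def dd (X Y : Set Ω) : ℝ :=
  |(μ (X ∩ Y)).toReal - (μ X).toReal * (μ Y).toReal|

lemma toReal_le_one (X : Set Ω) : (μ X).toReal ≤ 1 := by
  have h : μ X ≤ 1 := prob_le_one
  simpa using ENNReal.toReal_mono ENNReal.one_ne_top h

lemma dd_nonneg (X Y : Set Ω) : 0 ≤ dd μ X Y := abs_nonneg _

lemma dd_comm (X Y : Set Ω) : dd μ X Y = dd μ Y X := by
  rw [dd, dd, Set.inter_comm, mul_comm]

lemma dd_le_left (X Y : Set Ω) : dd μ X Y ≤ (μ X).toReal := by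
  have h1 : (μ (X ∩ Y)).toReal ≤ (μ X).toReal :=
    ENNReal.toReal_mono (measure_ne_top μ X) (measure_mono inter_subset_left)
  have h2 : (μ X).toReal * (μ Y).toReal ≤ (μ X).toReal :=
    mul_le_of_le_one_right ENNReal.toReal_nonneg (toReal_le_one μ Y)
  have h3 : (0:ℝ) ≤ (μ (X ∩ Y)).toReal := ENNReal.toReal_nonneg
  have h4 : (0:ℝ) ≤ (μ X).toReal * (μ Y).toReal :=
    mul_nonneg ENNReal.toReal_nonneg ENNReal.toReal_nonneg
  rw [dd, abs_sub_le_iff]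
  constructor <;> linarith

lemma dd_le_one (X Y : Set Ω) : dd μ X Y ≤ 1 :=
  (dd_le_left μ X Y).trans (toReal_le_one μ X)

lemma dd_compl_left {X : Set Ω} (hX : MeasurableSet X) (Y : Set Ω) :
    dd μ Xᶜ Y = dd μ X Y := by
  have h1 : μ (Y ∩ X) + μ (Y \ X) = μ Y := measure_inter_add_diff Y hX
  have h1' : (μ (Y ∩ X)).toReal + (μ (Y \ X)).toReal = (μ Y).toReal := by
    rw [← ENNReal.toReal_add (measure_ne_top _ _) (measure_ne_top _ _), h1]
  have h2 : Xᶜ ∩ Y = Y \ X := by rw [Set.inter_comm, Set.diff_eq]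
  have h3 : (μ Xᶜ).toReal = 1 - (μ X).toReal := by
    rw [measure_compl hX (measure_ne_top _ _), measure_univ,
      ENNReal.toReal_sub_of_le prob_le_one ENNReal.one_ne_top]
    simp
  have h4 : X ∩ Y = Y ∩ X := Set.inter_comm _ _
  rw [dd, dd, h2, h3, h4]
  rw [abs_sub_comm]
  ring_nf
  congr 1
  linarith

lemma dd_union_left_le {X Y : Set Ω} (Z : Set Ω) (hd : Disjoint X Y) (hY : MeasurableSet Y)
    (hZ : MeasurableSet Z) :
    dd μ (X ∪ Y) Z ≤ dd μ X Z + dd μ Y Z := by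
  have h1 : μ ((X ∪ Y) ∩ Z) = μ (X ∩ Z) + μ (Y ∩ Z) := by
    rw [Set.union_inter_distrib_right]
    exact measure_union (hd.mono inter_subset_left inter_subset_left) (hY.inter hZ)
  have h2 : μ (X ∪ Y) = μ X + μ Y := measure_union hd hY
  have h1' : (μ ((X ∪ Y) ∩ Z)).toReal = (μ (X ∩ Z)).toReal + (μ (Y ∩ Z)).toReal := by
    rw [h1, ENNReal.toReal_add (measure_ne_top _ _) (measure_ne_top _ _)]
  have h2' : (μ (X ∪ Y)).toReal = (μ X).toReal + (μ Y).toReal := by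
    rw [h2, ENNReal.toReal_add (measure_ne_top _ _) (measure_ne_top _ _)]
  rw [dd, dd, dd, h1', h2']
  have : (μ (X ∩ Z)).toReal + (μ (Y ∩ Z)).toReal - ((μ X).toReal + (μ Y).toReal) * (μ Z).toReal
      = ((μ (X ∩ Z)).toReal - (μ X).toReal * (μ Z).toReal)
        + ((μ (Y ∩ Z)).toReal - (μ Y).toReal * (μ Z).toReal) := by ring
  rw [this]
  exact abs_add_le _ _

lemma dd_empty_left (Y : Set Ω) : dd μ ∅ Y = 0 := by
  simp [dd]

end Stmt4Aux
namespace Stmt4Aux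

lemma tendsto_zero_of_forall_eventually_lt {u : ℕ → ℝ} (h0 : ∀ k, 0 ≤ u k)
    (h : ∀ ε > (0:ℝ), ∀ᶠ k in atTop, u k < ε) : Tendsto u atTop (nhds 0) :=
  tendsto_order.2 ⟨fun b hb => Eventually.of_forall fun k => lt_of_lt_of_le hb (h0 k), h⟩

variable {Ω : Type*} [MeasurableSpace Ω] (μ ν : Measure Ω) [IsProbabilityMeasure μ]
  (S : Ω → Ω)

lemma tail_sup (hS : Measurable S)
    (hstat : ∀ A : Set Ω, MeasurableSet A →
      Tendsto (fun k : ℕ => μ (S^[k] ⁻¹' A)) atTop (nhds (ν A)))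
    (T : ℕ → Set Ω) (hT : ∀ N, MeasurableSet (T N)) (hmono : Antitone T)
    (hempty : ⋂ N, T N = ∅) :
    Tendsto (fun N => ⨆ i : ℕ, (μ (S^[i] ⁻¹' T N)).toReal) atTop (nhds 0) := by
  have hνuniv : ν univ = 1 := by
    have h := hstat univ MeasurableSet.univ
    simp only [Set.preimage_univ, measure_univ] at h
    exact (tendsto_nhds_unique tendsto_const_nhds h).symm
  -- ν (T N) → 0
  have hνT : Tendsto (fun N => ν (T N)) atTop (nhds 0) := by
    have h := tendsto_measure_iInter_atTop (μ := ν)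
      (fun N => (hT N).nullMeasurableSet) hmono
      ⟨0, by
        refine ne_top_of_le_ne_top ?_ (measure_mono (subset_univ _))
        rw [hνuniv]; exact ENNReal.one_ne_top⟩
    rw [hempty] at h
    simpa [Function.comp_def] using h
  refine tendsto_zero_of_forall_eventually_lt
    (fun N => Real.iSup_nonneg fun i => ENNReal.toReal_nonneg) ?_
  intro ε hε
  -- choose M with (ν (T M)).toReal small
  have hνT' : Tendsto (fun N => (ν (T N)).toReal) atTop (nhds 0) := by
    have := (ENNReal.tendsto_toReal ENNReal.zero_ne_top).comp hνT
    simpa [Function.comp_def] using this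
  obtain ⟨M, hM⟩ := (hνT'.eventually (eventually_lt_nhds (show (0:ℝ) < ε/4 by linarith))).exists
  -- choose I with μ (S^[i] ⁻¹' T M) close to ν (T M) for i ≥ I
  have hstatM : Tendsto (fun i : ℕ => (μ (S^[i] ⁻¹' T M)).toReal) atTop
      (nhds ((ν (T M)).toReal)) := by
    refine (ENNReal.tendsto_toReal ?_).comp (hstat (T M) (hT M))
    exact ne_top_of_le_ne_top (by rw [hνuniv]; exact ENNReal.one_ne_top)
      (measure_mono (subset_univ _))
  have hIlt : ∀ᶠ i in atTop, (μ (S^[i] ⁻¹' T M)).toReal < ε/2 := by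
    have : (ν (T M)).toReal < ε/2 := by linarith
    exact hstatM.eventually (eventually_lt_nhds this)
  obtain ⟨I, hI⟩ := hIlt.exists_forall_of_atTop
  -- for each fixed i, μ (S^[i] ⁻¹' T N) → 0 in N
  have hfix : ∀ i : ℕ, ∀ᶠ N in atTop, (μ (S^[i] ⁻¹' T N)).toReal < ε/2 := by
    intro i
    have h := tendsto_measure_iInter_atTop (μ := μ)
      (fun N => ((hS.iterate i) (hT N)).nullMeasurableSet)
      (fun a b hab => Set.preimage_mono (hmono hab)) ⟨0, measure_ne_top _ _⟩
    have hinter : ⋂ N, S^[i] ⁻¹' T N = ∅ := by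
      rw [← Set.preimage_iInter, hempty, Set.preimage_empty]
    rw [hinter] at h
    simp only [measure_empty] at h
    have h' : Tendsto (fun N => (μ (S^[i] ⁻¹' T N)).toReal) atTop (nhds 0) := by
      have := (ENNReal.tendsto_toReal ENNReal.zero_ne_top).comp h
      simpa [Function.comp_def] using this
    exact h'.eventually (eventually_lt_nhds (by linarith))
  have hfin : ∀ᶠ N in atTop, ∀ i < I, (μ (S^[i] ⁻¹' T N)).toReal < ε/2 :=
    (eventually_all_finite (Set.finite_Iio I)).2 fun i _ => hfix i
  filter_upwards [hfin, eventually_ge_atTop M] with N hN hNM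
  have hbound : ∀ i : ℕ, (μ (S^[i] ⁻¹' T N)).toReal ≤ ε/2 := by
    intro i
    rcases lt_or_ge i I with hi | hi
    · exact (hN i hi).le
    · calc (μ (S^[i] ⁻¹' T N)).toReal
          ≤ (μ (S^[i] ⁻¹' T M)).toReal :=
            ENNReal.toReal_mono (measure_ne_top _ _)
              (measure_mono (Set.preimage_mono (hmono hNM)))
        _ ≤ ε/2 := (hI i hi).le
  calc (⨆ i : ℕ, (μ (S^[i] ⁻¹' T N)).toReal) ≤ ε/2 := ciSup_le hbound
    _ < ε := by linarith

end Stmt4Aux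

/-- Lemma 2.2: if the uniform mixing-type condition holds for all sets in a π-system
generating the σ-algebra, and the system is asymptotically stationary, then the
condition holds for all measurable sets. -/
theorem stmt_4 {Ω : Type*} [m : MeasurableSpace Ω] (μ ν : Measure Ω)
    [IsProbabilityMeasure μ] (S : Ω → Ω) (hS : Measurable S)
    (P : Set (Set Ω)) (hPi : IsPiSystem P) (hgen : m = MeasurableSpace.generateFrom P)
    (hstat : ∀ A : Set Ω, MeasurableSet A →
      Tendsto (fun k : ℕ => μ (S^[k] ⁻¹' A)) atTop (nhds (ν A)))
    (hP : ∀ A ∈ P, ∀ B ∈ P,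
      Tendsto (fun k : ℕ => ⨆ i : ℕ,
        |(μ (S^[i] ⁻¹' A ∩ S^[k] ⁻¹' (S^[i] ⁻¹' B))).toReal -
          (μ (S^[i] ⁻¹' A)).toReal * (μ (S^[k] ⁻¹' (S^[i] ⁻¹' B))).toReal|)
        atTop (nhds 0)) :
    ∀ A B : Set Ω, MeasurableSet A → MeasurableSet B →
      Tendsto (fun k : ℕ => ⨆ i : ℕ,
        |(μ (S^[i] ⁻¹' A ∩ S^[k] ⁻¹' (S^[i] ⁻¹' B))).toReal -
          (μ (S^[i] ⁻¹' A)).toReal * (μ (S^[k] ⁻¹' (S^[i] ⁻¹' B))).toReal|)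
        atTop (nhds 0) := by
  open Stmt4Aux in
  have key : ∀ (C : Set Ω) (i k : ℕ), S^[k] ⁻¹' (S^[i] ⁻¹' C) = S^[i+k] ⁻¹' C := by
    intro C i k
    rw [← Set.preimage_comp, ← Function.iterate_add]
  set Q : Set Ω → Set Ω → Prop := fun X Y =>
    Tendsto (fun k : ℕ => ⨆ i : ℕ, Stmt4Aux.dd μ (S^[i] ⁻¹' X) (S^[i+k] ⁻¹' Y))
      atTop (nhds 0) with hQdef
  have hfun : ∀ X Y : Set Ω, (fun k : ℕ => ⨆ i : ℕ,
      |(μ (S^[i] ⁻¹' X ∩ S^[k] ⁻¹' (S^[i] ⁻¹' Y))).toReal -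
        (μ (S^[i] ⁻¹' X)).toReal * (μ (S^[k] ⁻¹' (S^[i] ⁻¹' Y))).toReal|)
      = fun k : ℕ => ⨆ i : ℕ, Stmt4Aux.dd μ (S^[i] ⁻¹' X) (S^[i+k] ⁻¹' Y) := by
    intro X Y
    funext k
    congr 1
    funext i
    rw [key, Stmt4Aux.dd]
  have hmeas : ∀ (i : ℕ) {X : Set Ω}, MeasurableSet X → MeasurableSet (S^[i] ⁻¹' X) :=
    fun i _ hX => (hS.iterate i) hX
  have hbdd : ∀ (X Y : Set Ω) (k : ℕ),
      BddAbove (Set.range fun i : ℕ => Stmt4Aux.dd μ (S^[i] ⁻¹' X) (S^[i+k] ⁻¹' Y)) := by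
    intro X Y k
    refine ⟨1, ?_⟩
    rintro x ⟨i, rfl⟩
    exact Stmt4Aux.dd_le_one μ _ _
  have hbddm : ∀ (X : Set Ω),
      BddAbove (Set.range fun j : ℕ => (μ (S^[j] ⁻¹' X)).toReal) := by
    intro X
    refine ⟨1, ?_⟩
    rintro x ⟨j, rfl⟩
    exact Stmt4Aux.toReal_le_one μ _
  have hsupnn : ∀ (X Y : Set Ω) (k : ℕ),
      0 ≤ ⨆ i : ℕ, Stmt4Aux.dd μ (S^[i] ⁻¹' X) (S^[i+k] ⁻¹' Y) :=
    fun X Y k => Real.iSup_nonneg fun i => Stmt4Aux.dd_nonneg μ _ _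
  -- empty set
  have hQempty_left : ∀ Y, Q ∅ Y := by
    intro Y
    rw [hQdef]
    simp only [Set.preimage_empty, Stmt4Aux.dd_empty_left, ciSup_const]
    exact tendsto_const_nhds
  have hQempty_right : ∀ X, Q X ∅ := by
    intro X
    rw [hQdef]
    have : ∀ (i k : ℕ), Stmt4Aux.dd μ (S^[i] ⁻¹' X) (S^[i+k] ⁻¹' (∅ : Set Ω)) = 0 := by
      intro i k
      rw [Set.preimage_empty, Stmt4Aux.dd_comm, Stmt4Aux.dd_empty_left]
    simp only [this, ciSup_const]
    exact tendsto_const_nhds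
  -- complements
  have hQcompl_left : ∀ X Y : Set Ω, MeasurableSet X → Q X Y → Q Xᶜ Y := by
    intro X Y hX h
    rw [hQdef] at h ⊢
    have heq : ∀ (i k : ℕ), Stmt4Aux.dd μ (S^[i] ⁻¹' Xᶜ) (S^[i+k] ⁻¹' Y)
        = Stmt4Aux.dd μ (S^[i] ⁻¹' X) (S^[i+k] ⁻¹' Y) := by
      intro i k
      rw [Set.preimage_compl, Stmt4Aux.dd_compl_left μ (hmeas i hX)]
    simpa only [heq] using h
  have hQcompl_right : ∀ X Y : Set Ω, MeasurableSet Y → Q X Y → Q X Yᶜ := by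
    intro X Y hY h
    rw [hQdef] at h ⊢
    have heq : ∀ (i k : ℕ), Stmt4Aux.dd μ (S^[i] ⁻¹' X) (S^[i+k] ⁻¹' Yᶜ)
        = Stmt4Aux.dd μ (S^[i] ⁻¹' X) (S^[i+k] ⁻¹' Y) := by
      intro i k
      rw [Set.preimage_compl, Stmt4Aux.dd_comm,
        Stmt4Aux.dd_compl_left μ (hmeas (i+k) hY), Stmt4Aux.dd_comm]
    simpa only [heq] using h
  -- binary disjoint unions
  have hQunion2_left : ∀ X X' Y : Set Ω, Disjoint X X' → MeasurableSet X' → MeasurableSet Y →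
      Q X Y → Q X' Y → Q (X ∪ X') Y := by
    intro X X' Y hd hX' hY h h'
    rw [hQdef] at h h' ⊢
    refine squeeze_zero (fun k => hsupnn _ _ _) (g := fun k =>
      (⨆ i : ℕ, Stmt4Aux.dd μ (S^[i] ⁻¹' X) (S^[i+k] ⁻¹' Y)) +
      (⨆ i : ℕ, Stmt4Aux.dd μ (S^[i] ⁻¹' X') (S^[i+k] ⁻¹' Y))) ?_ (by simpa using h.add h')
    intro k
    refine ciSup_le fun i => ?_
    rw [Set.preimage_union]
    calc Stmt4Aux.dd μ (S^[i] ⁻¹' X ∪ S^[i] ⁻¹' X') (S^[i+k] ⁻¹' Y)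
        ≤ Stmt4Aux.dd μ (S^[i] ⁻¹' X) (S^[i+k] ⁻¹' Y)
          + Stmt4Aux.dd μ (S^[i] ⁻¹' X') (S^[i+k] ⁻¹' Y) :=
          Stmt4Aux.dd_union_left_le μ _ (hd.preimage _) (hmeas i hX') (hmeas (i+k) hY)
      _ ≤ _ := add_le_add (le_ciSup (hbdd X Y k) i) (le_ciSup (hbdd X' Y k) i)
  have hQunion2_right : ∀ X Y Y' : Set Ω, Disjoint Y Y' → MeasurableSet X → MeasurableSet Y' →
      Q X Y → Q X Y' → Q X (Y ∪ Y') := by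
    intro X Y Y' hd hX hY' h h'
    rw [hQdef] at h h' ⊢
    refine squeeze_zero (fun k => hsupnn _ _ _) (g := fun k =>
      (⨆ i : ℕ, Stmt4Aux.dd μ (S^[i] ⁻¹' X) (S^[i+k] ⁻¹' Y)) +
      (⨆ i : ℕ, Stmt4Aux.dd μ (S^[i] ⁻¹' X) (S^[i+k] ⁻¹' Y'))) ?_ (by simpa using h.add h')
    intro k
    refine ciSup_le fun i => ?_
    rw [Set.preimage_union]
    calc Stmt4Aux.dd μ (S^[i] ⁻¹' X) (S^[i+k] ⁻¹' Y ∪ S^[i+k] ⁻¹' Y')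
        = Stmt4Aux.dd μ (S^[i+k] ⁻¹' Y ∪ S^[i+k] ⁻¹' Y') (S^[i] ⁻¹' X) :=
          Stmt4Aux.dd_comm μ _ _
      _ ≤ Stmt4Aux.dd μ (S^[i+k] ⁻¹' Y) (S^[i] ⁻¹' X)
          + Stmt4Aux.dd μ (S^[i+k] ⁻¹' Y') (S^[i] ⁻¹' X) :=
          Stmt4Aux.dd_union_left_le μ _ (hd.preimage _) (hmeas (i+k) hY') (hmeas i hX)
      _ = Stmt4Aux.dd μ (S^[i] ⁻¹' X) (S^[i+k] ⁻¹' Y)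
          + Stmt4Aux.dd μ (S^[i] ⁻¹' X) (S^[i+k] ⁻¹' Y') := by
          rw [Stmt4Aux.dd_comm μ (S^[i+k] ⁻¹' Y), Stmt4Aux.dd_comm μ (S^[i+k] ⁻¹' Y')]
      _ ≤ _ := add_le_add (le_ciSup (hbdd X Y k) i) (le_ciSup (hbdd X Y' k) i)
  -- countable disjoint unions
  have hQiUnion_left : ∀ (Y : Set Ω), MeasurableSet Y → ∀ f : ℕ → Set Ω,
      Pairwise (Function.onFun Disjoint f) → (∀ n, MeasurableSet (f n)) → (∀ n, Q (f n) Y) →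
      Q (⋃ n, f n) Y := by
    intro Y hY f hdisj hfm hfQ
    set U : ℕ → Set Ω := fun N => ⋃ n ∈ Finset.range N, f n with hU
    have hUm : ∀ N, MeasurableSet (U N) :=
      fun N => (Finset.range N).measurableSet_biUnion (fun n _ => hfm n)
    have hUmono : Monotone U := fun a b hab =>
      Set.biUnion_subset_biUnion_left (Finset.range_subset_range.2 hab)
    have hUsub : ∀ N, U N ⊆ ⋃ n, f n :=
      fun N => Set.iUnion₂_subset fun n _ => Set.subset_iUnion f n
    have hdisjUf : ∀ N, Disjoint (U N) (f N) := by
      intro N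
      refine Set.disjoint_left.2 fun x hx hx' => ?_
      obtain ⟨n, hn, hxn⟩ := Set.mem_iUnion₂.1 hx
      exact Set.disjoint_left.1 (hdisj (Finset.mem_range.1 hn).ne) hxn hx'
    have hQU : ∀ N, Q (U N) Y := by
      intro N
      induction N with
      | zero => simpa [hU] using hQempty_left Y
      | succ N ih =>
        have hstep : U (N + 1) = f N ∪ U N := by
          rw [hU]
          simp [Finset.range_add_one, Set.biUnion_insert]
        rw [hstep]
        exact hQunion2_left (f N) (U N) Y (hdisjUf N).symm (hUm N) hY (hfQ N) ih
    set T : ℕ → Set Ω := fun N => (⋃ n, f n) \ U N with hT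
    have hTm : ∀ N, MeasurableSet (T N) :=
      fun N => (MeasurableSet.iUnion hfm).diff (hUm N)
    have hTanti : Antitone T := fun a b hab => Set.diff_subset_diff_right (hUmono hab)
    have hTempty : ⋂ N, T N = ∅ := by
      refine Set.eq_empty_iff_forall_notMem.2 fun x hx => ?_
      rw [Set.mem_iInter] at hx
      obtain ⟨n, hn⟩ := Set.mem_iUnion.1 (hx 0).1
      exact (hx (n + 1)).2 (Set.mem_biUnion (Finset.mem_range.2 (Nat.lt_succ_self n)) hn)
    have htail := Stmt4Aux.tail_sup μ ν S hS hstat T hTm hTanti hTempty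
    rw [hQdef]
    refine Stmt4Aux.tendsto_zero_of_forall_eventually_lt (fun k => hsupnn _ _ _) ?_
    intro ε hε
    obtain ⟨N, hN⟩ := (htail.eventually (eventually_lt_nhds (half_pos hε))).exists
    have hUQ := hQU N
    rw [hQdef] at hUQ
    filter_upwards [hUQ.eventually (eventually_lt_nhds (half_pos hε))] with k hk
    have hb : ∀ i : ℕ, Stmt4Aux.dd μ (S^[i] ⁻¹' ⋃ n, f n) (S^[i+k] ⁻¹' Y)
        ≤ (⨆ i : ℕ, Stmt4Aux.dd μ (S^[i] ⁻¹' U N) (S^[i+k] ⁻¹' Y))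
          + (⨆ j : ℕ, (μ (S^[j] ⁻¹' T N)).toReal) := by
      intro i
      have hsplit : (⋃ n, f n) = U N ∪ T N := (Set.union_diff_cancel (hUsub N)).symm
      rw [hsplit, Set.preimage_union]
      calc Stmt4Aux.dd μ (S^[i] ⁻¹' U N ∪ S^[i] ⁻¹' T N) (S^[i+k] ⁻¹' Y)
          ≤ Stmt4Aux.dd μ (S^[i] ⁻¹' U N) (S^[i+k] ⁻¹' Y)
            + Stmt4Aux.dd μ (S^[i] ⁻¹' T N) (S^[i+k] ⁻¹' Y) :=
            Stmt4Aux.dd_union_left_le μ _ (disjoint_sdiff_self_right.preimage _)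
              (hmeas i (hTm N)) (hmeas (i+k) hY)
        _ ≤ _ := add_le_add (le_ciSup (hbdd (U N) Y k) i)
            ((Stmt4Aux.dd_le_left μ _ _).trans (le_ciSup (hbddm (T N)) i))
    calc (⨆ i : ℕ, Stmt4Aux.dd μ (S^[i] ⁻¹' ⋃ n, f n) (S^[i+k] ⁻¹' Y)) ≤ _ := ciSup_le hb
      _ < ε/2 + ε/2 := add_lt_add hk hN
      _ = ε := add_halves ε
  have hQiUnion_right : ∀ (X : Set Ω), MeasurableSet X → ∀ f : ℕ → Set Ω,
      Pairwise (Function.onFun Disjoint f) → (∀ n, MeasurableSet (f n)) → (∀ n, Q X (f n)) →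
      Q X (⋃ n, f n) := by
    intro X hX f hdisj hfm hfQ
    set U : ℕ → Set Ω := fun N => ⋃ n ∈ Finset.range N, f n with hU
    have hUm : ∀ N, MeasurableSet (U N) :=
      fun N => (Finset.range N).measurableSet_biUnion (fun n _ => hfm n)
    have hUmono : Monotone U := fun a b hab =>
      Set.biUnion_subset_biUnion_left (Finset.range_subset_range.2 hab)
    have hUsub : ∀ N, U N ⊆ ⋃ n, f n :=
      fun N => Set.iUnion₂_subset fun n _ => Set.subset_iUnion f n
    have hdisjUf : ∀ N, Disjoint (U N) (f N) := by
      intro N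
      refine Set.disjoint_left.2 fun x hx hx' => ?_
      obtain ⟨n, hn, hxn⟩ := Set.mem_iUnion₂.1 hx
      exact Set.disjoint_left.1 (hdisj (Finset.mem_range.1 hn).ne) hxn hx'
    have hQU : ∀ N, Q X (U N) := by
      intro N
      induction N with
      | zero => simpa [hU] using hQempty_right X
      | succ N ih =>
        have hstep : U (N + 1) = f N ∪ U N := by
          rw [hU]
          simp [Finset.range_add_one, Set.biUnion_insert]
        rw [hstep]
        exact hQunion2_right X (f N) (U N) (hdisjUf N).symm hX (hUm N) (hfQ N) ih
    set T : ℕ → Set Ω := fun N => (⋃ n, f n) \ U N with hT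
    have hTm : ∀ N, MeasurableSet (T N) :=
      fun N => (MeasurableSet.iUnion hfm).diff (hUm N)
    have hTanti : Antitone T := fun a b hab => Set.diff_subset_diff_right (hUmono hab)
    have hTempty : ⋂ N, T N = ∅ := by
      refine Set.eq_empty_iff_forall_notMem.2 fun x hx => ?_
      rw [Set.mem_iInter] at hx
      obtain ⟨n, hn⟩ := Set.mem_iUnion.1 (hx 0).1
      exact (hx (n + 1)).2 (Set.mem_biUnion (Finset.mem_range.2 (Nat.lt_succ_self n)) hn)
    have htail := Stmt4Aux.tail_sup μ ν S hS hstat T hTm hTanti hTempty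
    rw [hQdef]
    refine Stmt4Aux.tendsto_zero_of_forall_eventually_lt (fun k => hsupnn _ _ _) ?_
    intro ε hε
    obtain ⟨N, hN⟩ := (htail.eventually (eventually_lt_nhds (half_pos hε))).exists
    have hUQ := hQU N
    rw [hQdef] at hUQ
    filter_upwards [hUQ.eventually (eventually_lt_nhds (half_pos hε))] with k hk
    have hb : ∀ i : ℕ, Stmt4Aux.dd μ (S^[i] ⁻¹' X) (S^[i+k] ⁻¹' ⋃ n, f n)
        ≤ (⨆ i : ℕ, Stmt4Aux.dd μ (S^[i] ⁻¹' X) (S^[i+k] ⁻¹' U N))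
          + (⨆ j : ℕ, (μ (S^[j] ⁻¹' T N)).toReal) := by
      intro i
      have hsplit : (⋃ n, f n) = U N ∪ T N := (Set.union_diff_cancel (hUsub N)).symm
      rw [hsplit, Set.preimage_union]
      calc Stmt4Aux.dd μ (S^[i] ⁻¹' X) (S^[i+k] ⁻¹' U N ∪ S^[i+k] ⁻¹' T N)
          = Stmt4Aux.dd μ (S^[i+k] ⁻¹' U N ∪ S^[i+k] ⁻¹' T N) (S^[i] ⁻¹' X) :=
            Stmt4Aux.dd_comm μ _ _
        _ ≤ Stmt4Aux.dd μ (S^[i+k] ⁻¹' U N) (S^[i] ⁻¹' X)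
            + Stmt4Aux.dd μ (S^[i+k] ⁻¹' T N) (S^[i] ⁻¹' X) :=
            Stmt4Aux.dd_union_left_le μ _ (disjoint_sdiff_self_right.preimage _)
              (hmeas (i+k) (hTm N)) (hmeas i hX)
        _ = Stmt4Aux.dd μ (S^[i] ⁻¹' X) (S^[i+k] ⁻¹' U N)
            + Stmt4Aux.dd μ (S^[i+k] ⁻¹' T N) (S^[i] ⁻¹' X) := by
            rw [Stmt4Aux.dd_comm μ (S^[i+k] ⁻¹' U N)]
        _ ≤ _ := add_le_add (le_ciSup (hbdd X (U N) k) i)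
            ((Stmt4Aux.dd_le_left μ _ _).trans (le_ciSup (hbddm (T N)) (i+k)))
    calc (⨆ i : ℕ, Stmt4Aux.dd μ (S^[i] ⁻¹' X) (S^[i+k] ⁻¹' ⋃ n, f n)) ≤ _ := ciSup_le hb
      _ < ε/2 + ε/2 := add_lt_add hk hN
      _ = ε := add_halves ε
  -- step 1 : B in the π-system, A measurable
  have step1 : ∀ Bp ∈ P, ∀ X : Set Ω, MeasurableSet X → Q X Bp := by
    intro Bp hBp
    have hBpm : MeasurableSet Bp := hgen ▸ MeasurableSpace.measurableSet_generateFrom hBp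
    refine MeasurableSpace.induction_on_inter (C := fun X _ => Q X Bp) hgen hPi
      (hQempty_left Bp) (fun t ht => ?_) (fun t htm h => hQcompl_left t Bp htm h)
      (fun f hd hm hq => hQiUnion_left Bp hBpm f hd hm hq)
    have h := hP t ht Bp hBp
    rw [hfun t Bp] at h
    rw [hQdef]
    exact h
  -- step 2 : both measurable
  intro A B hA hB
  have hfinal : Q A B := by
    refine MeasurableSpace.induction_on_inter (C := fun Y _ => Q A Y) hgen hPi
      (hQempty_right A) (fun t ht => step1 t ht A hA)
      (fun t htm h => hQcompl_right A t htm h)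
      (fun f hd hm hq => hQiUnion_right A hA f hd hm hq) B hB
  rw [hfun A B]
  rw [hQdef] at hfinal
  exact hfinal
end

section
/- For any dynamical system (Ω, Σ, μ, S), the system (Ω^ℕ, Σ^ℕ, μ^ℕ, S^ℕ), where S^ℕ((ω_n)_n) = (S(ω_{n+1}))_n, is mixing: lim_{k→∞} |μ^ℕ((S^ℕ)^{-k}A ∩ B) − μ^ℕ((S^ℕ)^{-k}A)μ^ℕ(B)| = 0 for all A, B ∈ Σ^ℕ. -/
open MeasureTheory Filter Set
open scoped symmDiff

/-- The shift-type map `Sℕ((ωₙ)ₙ) = (S(ω_{n+1}))ₙ`. -/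
def shiftS {Ω : Type*} (S : Ω → Ω) : (ℕ → Ω) → (ℕ → Ω) := fun ω n => S (ω (n + 1))

section Aux

variable {Ω : Type*} [MeasurableSpace Ω]

lemma shiftS_iterate (S : Ω → Ω) (k : ℕ) (ω : ℕ → Ω) (n : ℕ) :
    (shiftS S)^[k] ω n = S^[k] (ω (n + k)) := by
  induction k generalizing ω n with
  | zero => simp
  | succ k ih =>
      rw [Function.iterate_succ_apply, ih, Function.iterate_succ_apply]
      simp only [shiftS]
      rw [show n + k + 1 = n + (k + 1) by omega]

lemma shiftS_measurable {S : Ω → Ω} (hS : Measurable S) : Measurable (shiftS S) :=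
  measurable_pi_lambda _ fun n => hS.comp (measurable_pi_apply (n + 1))

/-- cylinders with constraints in an arbitrary finite range -/
def cylAll (Ω : Type*) [MeasurableSpace Ω] : Set (Set (ℕ → Ω)) :=
  {s | ∃ (An : ℕ → Set Ω) (m : ℕ), (∀ n, MeasurableSet (An n)) ∧ (∀ n > m, An n = Set.univ) ∧
    s = {f : ℕ → Ω | ∀ n, f n ∈ An n}}

/-- cylinders with constraints among the first `k` coordinates -/
def cylLt (Ω : Type*) [MeasurableSpace Ω] (k : ℕ) : Set (Set (ℕ → Ω)) :=
  {s | ∃ (An : ℕ → Set Ω), (∀ n, MeasurableSet (An n)) ∧ (∀ n ≥ k, An n = Set.univ) ∧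
    s = {f : ℕ → Ω | ∀ n, f n ∈ An n}}

omit [MeasurableSpace Ω] in
lemma cyl_inter (An Bn : ℕ → Set Ω) :
    {f : ℕ → Ω | ∀ n, f n ∈ An n} ∩ {f : ℕ → Ω | ∀ n, f n ∈ Bn n}
      = {f : ℕ → Ω | ∀ n, f n ∈ An n ∩ Bn n} := by
  ext f; simp [forall_and]

lemma isPiSystem_cylAll : IsPiSystem (cylAll Ω) := by
  rintro s ⟨An, m, hAn, hA, rfl⟩ t ⟨Bn, m', hBn, hB, rfl⟩ -
  refine ⟨fun n => An n ∩ Bn n, max m m', fun n => (hAn n).inter (hBn n),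
    fun n hn => ?_, by ext f; simp [forall_and]⟩
  simp only
  rw [hA n (lt_of_le_of_lt (le_max_left _ _) hn),
      hB n (lt_of_le_of_lt (le_max_right _ _) hn), univ_inter]

lemma isPiSystem_cylLt (k : ℕ) : IsPiSystem (cylLt Ω k) := by
  rintro s ⟨An, hAn, hA, rfl⟩ t ⟨Bn, hBn, hB, rfl⟩ -
  refine ⟨fun n => An n ∩ Bn n, fun n => (hAn n).inter (hBn n),
    fun n hn => ?_, by ext f; simp [forall_and]⟩
  simp only
  rw [hA n hn, hB n hn, univ_inter]

lemma cyl_measurableSet {An : ℕ → Set Ω} (hAn : ∀ n, MeasurableSet (An n)) :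
    MeasurableSet {f : ℕ → Ω | ∀ n, f n ∈ An n} := by
  have : {f : ℕ → Ω | ∀ n, f n ∈ An n} = ⋂ n, (fun f : ℕ → Ω => f n) ⁻¹' An n := by
    ext f; simp
  rw [this]
  exact MeasurableSet.iInter fun n => measurable_pi_apply n (hAn n)

end Aux
section Aux2

variable {Ω : Type*} [MeasurableSpace Ω]

/-- projection onto first `k` coordinates -/
def projF (Ω : Type*) (k : ℕ) : (ℕ → Ω) → (Fin k → Ω) := fun f i => f i

lemma measurable_projF (k : ℕ) : Measurable (projF Ω k) :=
  measurable_pi_lambda _ fun i => measurable_pi_apply (i : ℕ)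

/-- σ-algebra of the first `k` coordinates -/
def Fσ (Ω : Type*) [MeasurableSpace Ω] (k : ℕ) : MeasurableSpace (ℕ → Ω) :=
  MeasurableSpace.comap (projF Ω k) MeasurableSpace.pi

lemma Fσ_mono {m m' : ℕ} (h : m ≤ m') : Fσ Ω m ≤ Fσ Ω m' := by
  have hco : projF Ω m = (fun g : Fin m' → Ω => fun i : Fin m => g (Fin.castLE h i)) ∘ projF Ω m' :=
    rfl
  rw [Fσ, hco, ← MeasurableSpace.comap_comp]
  exact MeasurableSpace.comap_mono
    (Measurable.comap_le (measurable_pi_lambda _ fun i => measurable_pi_apply _))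

lemma Fσ_le_pi (k : ℕ) : Fσ Ω k ≤ MeasurableSpace.pi :=
  Measurable.comap_le (measurable_projF k)

lemma generateFrom_cylLt (k : ℕ) :
    MeasurableSpace.generateFrom (cylLt Ω k) = Fσ Ω k := by
  refine le_antisymm (MeasurableSpace.generateFrom_le ?_) ?_
  · rintro s ⟨An, hAn, hA, rfl⟩
    refine MeasurableSpace.measurableSet_comap.2
      ⟨{g : Fin k → Ω | ∀ i : Fin k, g i ∈ An (i : ℕ)}, ?_, ?_⟩
    · have : {g : Fin k → Ω | ∀ i : Fin k, g i ∈ An (i : ℕ)}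
          = ⋂ i : Fin k, (fun g : Fin k → Ω => g i) ⁻¹' An i := by ext g; simp
      rw [this]
      exact MeasurableSet.iInter fun i => measurable_pi_apply i (hAn i)
    · ext f
      constructor
      · intro hf n
        by_cases hn : n < k
        · exact hf ⟨n, hn⟩
        · rw [hA n (le_of_not_gt hn)]; trivial
      · intro hf i
        exact hf i
  · rw [Fσ, ← generateFrom_pi, MeasurableSpace.comap_generateFrom]
    refine MeasurableSpace.generateFrom_le ?_
    rintro s ⟨t, ⟨u, hu, rfl⟩, rfl⟩
    refine MeasurableSpace.measurableSet_generateFrom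
      ⟨fun n => if h : n < k then u ⟨n, h⟩ else Set.univ, ?_, ?_, ?_⟩
    · intro n
      by_cases h : n < k
      · simpa [h] using hu ⟨n, h⟩ (mem_univ _)
      · simp [h]
    · intro n hn
      simp [Nat.not_lt_of_ge hn]
    · ext f
      simp only [projF, mem_preimage, Set.mem_pi, mem_univ, forall_true_left, mem_setOf_eq]
      constructor
      · intro hf n
        by_cases h : n < k
        · simpa [h] using hf ⟨n, h⟩
        · simp [h]
      · intro hf i
        have := hf (i : ℕ)
        simpa [i.isLt] using this

lemma eval_preimage_mem_cylLt (n : ℕ) {s : Set Ω} (hs : MeasurableSet s) :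
    (fun f : ℕ → Ω => f n) ⁻¹' s ∈ cylLt Ω (n + 1) := by
  refine ⟨Function.update (fun _ => Set.univ) n s, ?_, ?_, ?_⟩
  · intro j
    by_cases hj : j = n
    · subst hj; simpa using hs
    · simpa [Function.update_of_ne hj] using MeasurableSet.univ
  · intro j hj
    have hj' : j ≠ n := by omega
    simp [Function.update_of_ne hj']
  · ext f
    constructor
    · intro hf j
      by_cases hj : j = n
      · subst hj; simpa using hf
      · simp [Function.update_of_ne hj]
    · intro hf
      have := hf n
      simpa using this

lemma cylLt_subset_cylAll (k : ℕ) : cylLt Ω k ⊆ cylAll Ω := by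
  rintro s ⟨An, hAn, hA, rfl⟩
  exact ⟨An, k, hAn, fun n hn => hA n (le_of_lt hn), rfl⟩

lemma generateFrom_cylAll : MeasurableSpace.generateFrom (cylAll Ω) = MeasurableSpace.pi := by
  refine le_antisymm (MeasurableSpace.generateFrom_le ?_) ?_
  · rintro s ⟨An, m, hAn, hA, rfl⟩
    exact cyl_measurableSet hAn
  · have hpi : (MeasurableSpace.pi : MeasurableSpace (ℕ → Ω))
        = ⨆ n : ℕ, MeasurableSpace.comap (fun f : ℕ → Ω => f n) inferInstance := rfl
    rw [hpi]
    refine iSup_le fun n => ?_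
    rw [MeasurableSpace.comap_eq_generateFrom]
    refine MeasurableSpace.generateFrom_le ?_
    rintro t ⟨s, hs, rfl⟩
    exact MeasurableSpace.measurableSet_generateFrom
      (cylLt_subset_cylAll _ (eval_preimage_mem_cylLt n hs))

/-- the algebra of sets depending on finitely many coordinates -/
def cylAlg (Ω : Type*) [MeasurableSpace Ω] : Set (Set (ℕ → Ω)) :=
  {s | ∃ m, MeasurableSet[Fσ Ω m] s}

lemma isSetAlgebra_cylAlg : IsSetAlgebra (cylAlg Ω) where
  empty_mem := ⟨0, @MeasurableSet.empty _ (Fσ Ω 0)⟩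
  compl_mem := by rintro s ⟨m, hm⟩; exact ⟨m, hm.compl⟩
  union_mem := by
    rintro s t ⟨m, hm⟩ ⟨m', hm'⟩
    exact ⟨max m m', (Fσ_mono (le_max_left m m') _ hm).union (Fσ_mono (le_max_right m m') _ hm')⟩

lemma pi_eq_generateFrom_cylAlg :
    (MeasurableSpace.pi : MeasurableSpace (ℕ → Ω)) = MeasurableSpace.generateFrom (cylAlg Ω) := by
  refine le_antisymm ?_ (MeasurableSpace.generateFrom_le ?_)
  · rw [← generateFrom_cylAll]
    refine MeasurableSpace.generateFrom_le fun s hs => ?_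
    obtain ⟨An, m, hAn, hA, rfl⟩ := hs
    refine MeasurableSpace.measurableSet_generateFrom ⟨m + 1, ?_⟩
    rw [← generateFrom_cylLt]
    exact MeasurableSpace.measurableSet_generateFrom ⟨An, hAn, fun n hn => hA n (by omega), rfl⟩
  · rintro s ⟨m, hm⟩
    exact Fσ_le_pi m _ hm

end Aux2
section Main

variable {Ω : Type*} [MeasurableSpace Ω]

set_option linter.unusedSectionVars false

theorem indep_key (μ : Measure Ω) [IsProbabilityMeasure μ]
    {S : Ω → Ω} (hS : Measurable S)
    (M : Measure (ℕ → Ω)) [IsProbabilityMeasure M]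
    (hM : ∀ (An : ℕ → Set Ω), (∀ n, MeasurableSet (An n)) → ∀ m : ℕ,
      (∀ n > m, An n = Set.univ) →
      M {f : ℕ → Ω | ∀ n, f n ∈ An n} = ∏ n ∈ Finset.range (m + 1), μ (An n)) (k : ℕ) :
    ProbabilityTheory.Indep
      (MeasurableSpace.comap ((shiftS S)^[k]) MeasurableSpace.pi) (Fσ Ω k) M := by
  refine ProbabilityTheory.IndepSets.indep
    (Measurable.comap_le ((shiftS_measurable hS).iterate k)) (Fσ_le_pi k)
    (isPiSystem_cylAll.comap ((shiftS S)^[k])) (isPiSystem_cylLt k)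
    ?_ (generateFrom_cylLt k).symm ?_
  · rw [← generateFrom_cylAll, MeasurableSpace.comap_generateFrom]
    rfl
  · rw [ProbabilityTheory.IndepSets_iff]
    rintro C D ⟨c, ⟨An, mA, hAn, hA, rfl⟩, rfl⟩ ⟨Dn, hDn, hD, rfl⟩
    set A' : ℕ → Set Ω := fun j => if j < k then Set.univ else S^[k] ⁻¹' An (j - k) with hA'def
    have h1 : ∀ j < k, A' j = Set.univ := fun j hj => by simp [hA'def, hj]
    have hpre : (shiftS S)^[k] ⁻¹' {f : ℕ → Ω | ∀ n, f n ∈ An n}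
        = {f : ℕ → Ω | ∀ j, f j ∈ A' j} := by
      ext f
      simp only [mem_preimage, mem_setOf_eq, shiftS_iterate]
      constructor
      · intro h j
        by_cases hj : j < k
        · simp [h1 j hj]
        · have hj' : (j - k) + k = j := by omega
          simp only [hA'def, if_neg hj, mem_preimage]
          have := h (j - k)
          rwa [hj'] at this
      · intro h n
        have := h (n + k)
        have hnk : ¬ n + k < k := by omega
        simp only [hA'def, if_neg hnk, mem_preimage, Nat.add_sub_cancel] at this
        exact this
    have hA'meas : ∀ j, MeasurableSet (A' j) := by
      intro j
      by_cases hj : j < k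
      · simp [h1 j hj]
      · simp only [hA'def, if_neg hj]
        exact (hS.iterate k) (hAn _)
    have hA'univ : ∀ j > mA + k, A' j = Set.univ := by
      intro j hj
      have hj' : ¬ j < k := by omega
      simp only [hA'def, if_neg hj']
      rw [hA (j - k) (by omega), Set.preimage_univ]
    have MC : M ((shiftS S)^[k] ⁻¹' {f : ℕ → Ω | ∀ n, f n ∈ An n})
        = ∏ n ∈ Finset.range (mA + k + 1), μ (A' n) := by
      rw [hpre]; exact hM A' hA'meas (mA + k) hA'univ
    have MD : M {f : ℕ → Ω | ∀ n, f n ∈ Dn n} = ∏ n ∈ Finset.range (k + 1), μ (Dn n) :=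
      hM Dn hDn k fun n hn => hD n (le_of_lt hn)
    have Minter : M ((shiftS S)^[k] ⁻¹' {f : ℕ → Ω | ∀ n, f n ∈ An n}
          ∩ {f : ℕ → Ω | ∀ n, f n ∈ Dn n})
        = ∏ n ∈ Finset.range (mA + k + 1), μ (A' n ∩ Dn n) := by
      rw [hpre, cyl_inter]
      exact hM _ (fun n => (hA'meas n).inter (hDn n)) (mA + k)
        (fun n hn => by rw [hA'univ n hn, hD n (by omega), Set.univ_inter])
    rw [MC, MD, Minter]
    have hsplit : mA + k + 1 = k + (mA + 1) := by omega
    rw [hsplit]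
    have e1 : ∏ x ∈ Finset.range k, μ (A' x ∩ Dn x) = ∏ x ∈ Finset.range k, μ (Dn x) :=
      Finset.prod_congr rfl fun x hx => by
        rw [h1 x (Finset.mem_range.1 hx), Set.univ_inter]
    have e2 : ∏ x ∈ Finset.range (mA + 1), μ (A' (k + x) ∩ Dn (k + x))
        = ∏ x ∈ Finset.range (mA + 1), μ (A' (k + x)) :=
      Finset.prod_congr rfl fun x _ => by rw [hD (k + x) (by omega), Set.inter_univ]
    have e3 : ∏ x ∈ Finset.range k, μ (A' x) = 1 :=
      Finset.prod_eq_one fun x hx => by rw [h1 x (Finset.mem_range.1 hx), measure_univ]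
    have e4 : μ (Dn k) = 1 := by rw [hD k le_rfl, measure_univ]
    calc ∏ n ∈ Finset.range (k + (mA + 1)), μ (A' n ∩ Dn n)
        = (∏ x ∈ Finset.range k, μ (A' x ∩ Dn x))
            * ∏ x ∈ Finset.range (mA + 1), μ (A' (k + x) ∩ Dn (k + x)) :=
          Finset.prod_range_add _ k (mA + 1)
      _ = (∏ x ∈ Finset.range k, μ (Dn x)) * ∏ x ∈ Finset.range (mA + 1), μ (A' (k + x)) := by
          rw [e1, e2]
      _ = (∏ n ∈ Finset.range (k + (mA + 1)), μ (A' n))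
            * ∏ n ∈ Finset.range (k + 1), μ (Dn n) := by
          rw [Finset.prod_range_add (fun n => μ (A' n)) k (mA + 1), e3, one_mul,
            Finset.prod_range_succ (fun n => μ (Dn n)) k, e4, mul_one]
          exact mul_comm _ _

end Main
/-- For any dynamical system `(Ω, Σ, μ, S)`, the system `(Ω^ℕ, Σ^ℕ, μ^ℕ, Sℕ)` is
mixing, where `μ^ℕ` is the infinite product measure (characterized by its values on
cylinder sets). -/
theorem stmt_12 {Ω : Type*} [MeasurableSpace Ω] (μ : Measure Ω)
    [IsProbabilityMeasure μ] (S : Ω → Ω) (hS : Measurable S)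
    (M : Measure (ℕ → Ω)) [IsProbabilityMeasure M]
    (hM : ∀ (An : ℕ → Set Ω), (∀ n, MeasurableSet (An n)) → ∀ m : ℕ,
      (∀ n > m, An n = Set.univ) →
      M {f : ℕ → Ω | ∀ n, f n ∈ An n} = ∏ n ∈ Finset.range (m + 1), μ (An n)) :
    ∀ A B : Set (ℕ → Ω), MeasurableSet A → MeasurableSet B →
      Tendsto (fun k : ℕ =>
        |(M ((shiftS S)^[k] ⁻¹' A ∩ B)).toReal -
          (M ((shiftS S)^[k] ⁻¹' A)).toReal * (M B).toReal|)
        atTop (nhds 0) := by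
  intro A B hA hB
  rw [Metric.tendsto_atTop]
  intro ε hε
  have hdense : M.MeasureDense (cylAlg Ω) :=
    Measure.MeasureDense.of_generateFrom_isSetAlgebra_finite M isSetAlgebra_cylAlg
      pi_eq_generateFrom_cylAlg
  obtain ⟨B', hB'mem, hBB'⟩ := hdense.approx B hB (measure_ne_top M B) (ε / 3) (by linarith)
  obtain ⟨m, hB'm⟩ := hB'mem
  have hB'meas : MeasurableSet B' := Fσ_le_pi m _ hB'm
  have hδ : (M (B ∆ B')).toReal < ε / 3 := ENNReal.toReal_lt_of_lt_ofReal hBB'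
  refine ⟨m, fun k hk => ?_⟩
  rw [Real.dist_eq, sub_zero, abs_abs]
  have hCmeas : MeasurableSet[MeasurableSpace.comap ((shiftS S)^[k]) MeasurableSpace.pi]
      ((shiftS S)^[k] ⁻¹' A) := ⟨A, hA, rfl⟩
  have hDmeas : MeasurableSet[Fσ Ω k] B' := Fσ_mono hk _ hB'm
  have hprod : M ((shiftS S)^[k] ⁻¹' A ∩ B') = M ((shiftS S)^[k] ⁻¹' A) * M B' :=
    (ProbabilityTheory.Indep_iff _ _ M).1 (indep_key μ hS M hM k) _ _ hCmeas hDmeas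
  set C := (shiftS S)^[k] ⁻¹' A with hC
  have hCm : MeasurableSet C := ((shiftS_measurable hS).iterate k) hA
  set c := (M C).toReal with hc
  set b := (M B).toReal with hb
  set b' := (M B').toReal with hb'
  have hc0 : 0 ≤ c := ENNReal.toReal_nonneg
  have hc1 : c ≤ 1 := by
    have h := prob_le_one (μ := M) (s := C)
    simpa [hc] using ENNReal.toReal_mono ENNReal.one_ne_top h
  have h₁ : |(M (C ∩ B)).toReal - (M (C ∩ B')).toReal| ≤ (M (B ∆ B')).toReal := by
    refine le_trans (abs_measureReal_sub_le_measureReal_symmDiff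
      ((hCm.inter hB).nullMeasurableSet) ((hCm.inter hB'meas).nullMeasurableSet)) ?_
    have hsub : (C ∩ B) ∆ (C ∩ B') ⊆ B ∆ B' := by
      rw [← Set.inter_symmDiff_distrib_left]
      exact inter_subset_right
    exact ENNReal.toReal_mono (measure_ne_top M _) (measure_mono hsub)
  have h₂ : |b' - b| ≤ (M (B ∆ B')).toReal := by
    rw [abs_sub_comm]
    exact abs_measureReal_sub_le_measureReal_symmDiff hB.nullMeasurableSet
      hB'meas.nullMeasurableSet
  have h₃ : |c * b' - c * b| ≤ (M (B ∆ B')).toReal := by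
    rw [← mul_sub, abs_mul, abs_of_nonneg hc0]
    calc c * |b' - b| ≤ 1 * |b' - b| := mul_le_mul_of_nonneg_right hc1 (abs_nonneg _)
      _ = |b' - b| := one_mul _
      _ ≤ _ := h₂
  have key : |(M (C ∩ B)).toReal - c * b|
      ≤ |(M (C ∩ B)).toReal - (M (C ∩ B')).toReal| + |c * b' - c * b| := by
    have := abs_sub_le ((M (C ∩ B)).toReal) ((M (C ∩ B')).toReal) (c * b)
    have heq : (M (C ∩ B')).toReal = c * b' := by rw [hprod, ENNReal.toReal_mul]
    rw [heq] at this
    calc |(M (C ∩ B)).toReal - c * b|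
        ≤ |(M (C ∩ B)).toReal - c * b'| + |c * b' - c * b| := this
      _ = |(M (C ∩ B)).toReal - (M (C ∩ B')).toReal| + |c * b' - c * b| := by rw [heq]
  have : |(M (C ∩ B)).toReal - c * b| < ε := by linarith
  exact this
end

section
/- Let E be a separable metric space, μ a Borel probability measure on E, S : E → E Borel measurable. Assume: (1) for every Borel set A, sup_{i∈ℕ} |μ(S^{-i}A ∩ S^{-k}S^{-i}A) − μ(S^{-i}A)μ(S^{-k}S^{-i}A)| → 0 as k → ∞; and (2) (E, B(E), μ, S) is asymptotically stationary with stationary limit ν. Define μ_n on B(E^n) by μ_n(A) = μ{x ∈ E : (S(x),…,S^n(x)) ∈ A}. Then for every g ∈ C_b(E), ∫_{E^n} |(1/n)∑_{i=1}^n g(x_i) − ∫_E g dν|² dμ_n → 0 as n → ∞. -/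
open MeasureTheory Filter Set
set_option linter.unusedSectionVars false
set_option linter.unusedVariables false
set_option maxHeartbeats 1600000
namespace Stmt17


variable {E : Type*} [MeasurableSpace E]

noncomputable abbrev ind (A : Set E) : E → ℝ := A.indicator (fun _ => (1:ℝ))

lemma ind_comp (A : Set E) (T : E → E) (x : E) :
    ind A (T x) = ind (T ⁻¹' A) x := by
  by_cases h : T x ∈ A <;> simp [ind, Set.indicator_apply, h]

lemma ind_meas {A : Set E} (hA : MeasurableSet A) : Measurable (ind A) :=
  measurable_const.indicator hA

lemma ind_bdd (A : Set E) (x : E) : |ind A x| ≤ 1 := by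
  by_cases h : x ∈ A <;> simp [ind, Set.indicator_apply, h]

variable (μ : Measure E) (S : E → E)

lemma integrable_of_bdd [IsFiniteMeasure μ] {f : E → ℝ} (hf : Measurable f) {M : ℝ}
    (hb : ∀ x, |f x| ≤ M) : Integrable f μ :=
  ⟨hf.aestronglyMeasurable, HasFiniteIntegral.of_bounded (C := M)
    (ae_of_all _ (by simpa [Real.norm_eq_abs] using hb))⟩

noncomputable def itg (p : ℕ) (f : E → ℝ) : ℝ := ∫ x, f (S^[p] x) ∂μ

noncomputable def cov (p q : ℕ) (f h : E → ℝ) : ℝ :=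
  (∫ x, f (S^[p] x) * h (S^[q] x) ∂μ) - itg μ S p f * itg μ S q h

variable [IsProbabilityMeasure μ] (hS : Measurable S)

lemma toReal_le_one (A : Set E) : (μ A).toReal ≤ 1 := by
  have h := measure_mono (subset_univ A) (μ := μ)
  have := ENNReal.toReal_mono (by simp) h
  simpa using this

include hS in
lemma itg_bound (p : ℕ) {f : E → ℝ} (hf : Measurable f) {M : ℝ}
    (hb : ∀ x, |f x| ≤ M) : |itg μ S p f| ≤ M := by
  have : ‖∫ x, f (S^[p] x) ∂μ‖ ≤ M * (μ univ).toReal :=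
    norm_integral_le_of_norm_le_const (ae_of_all _ fun x => by
      simpa [Real.norm_eq_abs] using hb (S^[p] x))
  simpa [itg, Real.norm_eq_abs] using this

include hS in
lemma integral_mul_bound (p q : ℕ) {f h : E → ℝ} (hf : Measurable f) (hh : Measurable h)
    {Mf Mh : ℝ} (hMf : 0 ≤ Mf) (hbf : ∀ x, |f x| ≤ Mf) (hbh : ∀ x, |h x| ≤ Mh) :
    |∫ x, f (S^[p] x) * h (S^[q] x) ∂μ| ≤ Mf * Mh := by
  have : ‖∫ x, f (S^[p] x) * h (S^[q] x) ∂μ‖ ≤ (Mf * Mh) * (μ univ).toReal :=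
    norm_integral_le_of_norm_le_const (ae_of_all _ fun x => by
      have := mul_le_mul (hbf (S^[p] x)) (hbh (S^[q] x)) (abs_nonneg _) hMf
      simpa [Real.norm_eq_abs, abs_mul] using this)
  simpa [Real.norm_eq_abs] using this

include hS in
lemma integrable_comp (p : ℕ) {f : E → ℝ} (hf : Measurable f) {M : ℝ}
    (hb : ∀ x, |f x| ≤ M) : Integrable (fun x => f (S^[p] x)) μ :=
  integrable_of_bdd μ (hf.comp (hS.iterate p)) (fun x => hb _)

include hS in
lemma integrable_comp_mul (p q : ℕ) {f h : E → ℝ} (hf : Measurable f) (hh : Measurable h)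
    {Mf Mh : ℝ} (hMf : 0 ≤ Mf) (hbf : ∀ x, |f x| ≤ Mf) (hbh : ∀ x, |h x| ≤ Mh) :
    Integrable (fun x => f (S^[p] x) * h (S^[q] x)) μ :=
  integrable_of_bdd μ ((hf.comp (hS.iterate p)).mul (hh.comp (hS.iterate q)))
    (M := Mf * Mh) (fun x => by
      have := mul_le_mul (hbf (S^[p] x)) (hbh (S^[q] x)) (abs_nonneg _) hMf
      simpa [abs_mul] using this)

include hS in
lemma cov_abs_le (p q : ℕ) {f h : E → ℝ} (hf : Measurable f) (hh : Measurable h)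
    {Mf Mh : ℝ} (hMf : 0 ≤ Mf) (hMh : 0 ≤ Mh) (hbf : ∀ x, |f x| ≤ Mf) (hbh : ∀ x, |h x| ≤ Mh) :
    |cov μ S p q f h| ≤ 2 * (Mf * Mh) := by
  have h1 := integral_mul_bound μ S hS p q hf hh hMf hbf hbh
  have h2 := itg_bound μ S hS p hf hbf
  have h3 := itg_bound μ S hS q hh hbh
  have h4 : |itg μ S p f * itg μ S q h| ≤ Mf * Mh := by
    rw [abs_mul]; exact mul_le_mul h2 h3 (abs_nonneg _) hMf
  calc |cov μ S p q f h| ≤ |∫ x, f (S^[p] x) * h (S^[q] x) ∂μ| + |itg μ S p f * itg μ S q h| :=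
        abs_sub _ _
    _ ≤ Mf * Mh + Mf * Mh := add_le_add h1 h4
    _ = 2 * (Mf * Mh) := by ring




-- placeholders from p1 (will be merged)

lemma cov_comm (p q : ℕ) (f h : E → ℝ) : cov μ S p q f h = cov μ S q p h f := by
  unfold cov
  congr 1
  · congr 1; funext x; ring
  · ring

include hS in
lemma itg_sub (p : ℕ) {f f' : E → ℝ} (hf : Measurable f) (hf' : Measurable f')
    {Mf Mf' : ℝ} (hbf : ∀ x, |f x| ≤ Mf) (hbf' : ∀ x, |f' x| ≤ Mf') :
    itg μ S p (fun x => f x - f' x) = itg μ S p f - itg μ S p f' := by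
  unfold itg
  exact integral_sub (integrable_comp μ S hS p hf hbf) (integrable_comp μ S hS p hf' hbf')

include hS in
lemma cov_sub_left (p q : ℕ) {f f' h : E → ℝ} (hf : Measurable f) (hf' : Measurable f')
    (hh : Measurable h) {Mf Mf' Mh : ℝ} (hMf : 0 ≤ Mf) (hMf' : 0 ≤ Mf')
    (hbf : ∀ x, |f x| ≤ Mf) (hbf' : ∀ x, |f' x| ≤ Mf') (hbh : ∀ x, |h x| ≤ Mh) :
    cov μ S p q (fun x => f x - f' x) h = cov μ S p q f h - cov μ S p q f' h := by
  unfold cov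
  rw [itg_sub μ S hS p hf hf' hbf hbf']
  have : (∫ x, (f (S^[p] x) - f' (S^[p] x)) * h (S^[q] x) ∂μ)
      = (∫ x, f (S^[p] x) * h (S^[q] x) ∂μ) - ∫ x, f' (S^[p] x) * h (S^[q] x) ∂μ := by
    rw [← integral_sub (integrable_comp_mul μ S hS p q hf hh hMf hbf hbh)
      (integrable_comp_mul μ S hS p q hf' hh hMf' hbf' hbh)]
    congr 1; funext x; ring
  rw [this]; ring

include hS in
lemma cov_sub_right (p q : ℕ) {f h h' : E → ℝ} (hf : Measurable f) (hh : Measurable h)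
    (hh' : Measurable h') {Mf Mh Mh' : ℝ} (hMh : 0 ≤ Mh) (hMh' : 0 ≤ Mh')
    (hbf : ∀ x, |f x| ≤ Mf) (hbh : ∀ x, |h x| ≤ Mh) (hbh' : ∀ x, |h' x| ≤ Mh') :
    cov μ S p q f (fun x => h x - h' x) = cov μ S p q f h - cov μ S p q f h' := by
  rw [cov_comm, cov_sub_left μ S hS q p hh hh' hf hMh hMh' hbh hbh' hbf,
    cov_comm μ S q p h f, cov_comm μ S q p h' f]




lemma ind_mul_ind (A B : Set E) (x : E) : ind A x * ind B x = ind (A ∩ B) x := by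
  by_cases hA : x ∈ A <;> by_cases hB : x ∈ B <;>
    simp [ind, Set.indicator_apply, hA, hB, Set.mem_inter_iff]

include hS in
lemma itg_ind (p : ℕ) {A : Set E} (hA : MeasurableSet A) :
    itg μ S p (ind A) = (μ (S^[p] ⁻¹' A)).toReal := by
  unfold itg
  have h1 : (fun x => ind A (S^[p] x)) = ind (S^[p] ⁻¹' A) := by
    funext x; exact ind_comp A _ x
  rw [h1]
  have : MeasurableSet (S^[p] ⁻¹' A) := (hS.iterate p) hA
  rw [ind, integral_indicator_const (1:ℝ) this]
  simp
  rfl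

include hS in
lemma integral_ind_mul (p q : ℕ) {A B : Set E} (hA : MeasurableSet A) (hB : MeasurableSet B) :
    (∫ x, ind A (S^[p] x) * ind B (S^[q] x) ∂μ)
      = (μ (S^[p] ⁻¹' A ∩ S^[q] ⁻¹' B)).toReal := by
  have h1 : (fun x => ind A (S^[p] x) * ind B (S^[q] x))
      = ind (S^[p] ⁻¹' A ∩ S^[q] ⁻¹' B) := by
    funext x
    rw [ind_comp A _ x, ind_comp B _ x, ind_mul_ind]
  rw [h1]
  have : MeasurableSet (S^[p] ⁻¹' A ∩ S^[q] ⁻¹' B) :=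
    ((hS.iterate p) hA).inter ((hS.iterate q) hB)
  rw [ind, integral_indicator_const (1:ℝ) this]
  simp
  rfl

include hS in
lemma cov_ind (p q : ℕ) {A B : Set E} (hA : MeasurableSet A) (hB : MeasurableSet B) :
    cov μ S p q (ind A) (ind B)
      = (μ (S^[p] ⁻¹' A ∩ S^[q] ⁻¹' B)).toReal
        - (μ (S^[p] ⁻¹' A)).toReal * (μ (S^[q] ⁻¹' B)).toReal := by
  rw [cov, integral_ind_mul μ S hS p q hA hB, itg_ind μ S hS p hA, itg_ind μ S hS q hB]

include hS in
lemma cov_union (p q : ℕ) {A B : Set E} (hA : MeasurableSet A) (hB : MeasurableSet B)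
    (hd : Disjoint A B) :
    cov μ S p q (ind (A ∪ B)) (ind (A ∪ B))
      = cov μ S p q (ind A) (ind A) + cov μ S p q (ind B) (ind B)
        + cov μ S p q (ind A) (ind B) + cov μ S p q (ind B) (ind A) := by
  have hsum : ∀ x, ind (A ∪ B) x = ind A x + ind B x := fun x => by
    by_cases hxA : x ∈ A
    · have hxB : x ∉ B := fun hxB => absurd (hd.le_bot ⟨hxA, hxB⟩) (by simp)
      simp [ind, Set.indicator_apply, hxA, hxB]
    · by_cases hxB : x ∈ B <;> simp [ind, Set.indicator_apply, hxA, hxB]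
  have intAB : ∀ (C D : Set E), MeasurableSet C → MeasurableSet D →
      Integrable (fun x => ind C (S^[p] x) * ind D (S^[q] x)) μ := fun C D hC hD =>
    integrable_comp_mul μ S hS p q (ind_meas hC) (ind_meas hD) zero_le_one (ind_bdd C) (ind_bdd D)
  have intc : ∀ (r : ℕ) (C : Set E), MeasurableSet C →
      Integrable (fun x => ind C (S^[r] x)) μ := fun r C hC =>
    integrable_comp μ S hS r (ind_meas hC) (ind_bdd C)
  have e1 : (∫ x, ind (A ∪ B) (S^[p] x) * ind (A ∪ B) (S^[q] x) ∂μ)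
      = (∫ x, ind A (S^[p] x) * ind A (S^[q] x) ∂μ)
        + ((∫ x, ind A (S^[p] x) * ind B (S^[q] x) ∂μ)
        + ((∫ x, ind B (S^[p] x) * ind A (S^[q] x) ∂μ)
        + (∫ x, ind B (S^[p] x) * ind B (S^[q] x) ∂μ))) := by
    have heq : (fun x => ind (A ∪ B) (S^[p] x) * ind (A ∪ B) (S^[q] x))
        = (fun x => ind A (S^[p] x) * ind A (S^[q] x)
          + (ind A (S^[p] x) * ind B (S^[q] x)
          + (ind B (S^[p] x) * ind A (S^[q] x)
          + ind B (S^[p] x) * ind B (S^[q] x)))) := by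
      funext x; rw [hsum, hsum]; ring
    have i34 : Integrable (fun x => ind B (S^[p] x) * ind A (S^[q] x)
        + ind B (S^[p] x) * ind B (S^[q] x)) μ := by
      exact (intAB B A hB hA).add (intAB B B hB hB)
    have i234 : Integrable (fun x => ind A (S^[p] x) * ind B (S^[q] x)
        + (ind B (S^[p] x) * ind A (S^[q] x) + ind B (S^[p] x) * ind B (S^[q] x))) μ := by
      exact (intAB A B hA hB).add i34
    rw [heq, integral_add (intAB A A hA hA) i234,
        integral_add (intAB A B hA hB) i34,
        integral_add (intAB B A hB hA) (intAB B B hB hB)]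
  have e2 : ∀ r : ℕ, itg μ S r (ind (A ∪ B)) = itg μ S r (ind A) + itg μ S r (ind B) := by
    intro r
    unfold itg
    have heq : (fun x => ind (A ∪ B) (S^[r] x))
        = (fun x => ind A (S^[r] x) + ind B (S^[r] x)) := by
      funext x; rw [hsum]
    rw [heq, integral_add (intc r A hA) (intc r B hB)]
  rw [cov, cov, cov, cov, cov, e1, e2, e2]
  ring



include hS in
lemma itg_sumind (F : Finset ℤ) (c : ℤ → ℝ) (A : ℤ → Set E)
    (hA : ∀ j, MeasurableSet (A j)) (r : ℕ) :
    itg μ S r (fun x => ∑ j ∈ F, c j * ind (A j) x)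
      = ∑ j ∈ F, c j * itg μ S r (ind (A j)) := by
  unfold itg
  have e : (fun x => (fun y => ∑ j ∈ F, c j * ind (A j) y) (S^[r] x))
      = fun x => ∑ j ∈ F, c j * ind (A j) (S^[r] x) := rfl
  rw [e, integral_finset_sum _ (fun j _ =>
    (integrable_comp μ S hS r (ind_meas (hA j)) (ind_bdd (A j))).const_mul (c j))]
  exact Finset.sum_congr rfl (fun j _ => integral_const_mul _ _)

include hS in
lemma cov_sumind (F : Finset ℤ) (c : ℤ → ℝ) (A : ℤ → Set E)
    (hA : ∀ j, MeasurableSet (A j)) (p q : ℕ) :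
    cov μ S p q (fun x => ∑ j ∈ F, c j * ind (A j) x) (fun x => ∑ j ∈ F, c j * ind (A j) x)
      = ∑ j ∈ F, ∑ l ∈ F, (c j * c l) * cov μ S p q (ind (A j)) (ind (A l)) := by
  have int_jl : ∀ j l : ℤ, Integrable (fun x => ind (A j) (S^[p] x) * ind (A l) (S^[q] x)) μ :=
    fun j l => integrable_comp_mul μ S hS p q (ind_meas (hA j)) (ind_meas (hA l))
      zero_le_one (ind_bdd (A j)) (ind_bdd (A l))
  have key1 : (∫ x, (fun y => ∑ j ∈ F, c j * ind (A j) y) (S^[p] x)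
        * (fun y => ∑ j ∈ F, c j * ind (A j) y) (S^[q] x) ∂μ)
      = ∑ j ∈ F, ∑ l ∈ F, (c j * c l)
          * ∫ x, ind (A j) (S^[p] x) * ind (A l) (S^[q] x) ∂μ := by
    have e : (fun x => (fun y => ∑ j ∈ F, c j * ind (A j) y) (S^[p] x)
          * (fun y => ∑ j ∈ F, c j * ind (A j) y) (S^[q] x))
        = fun x => ∑ j ∈ F, ∑ l ∈ F,
            (c j * c l) * (ind (A j) (S^[p] x) * ind (A l) (S^[q] x)) := by
      funext x
      simp only
      rw [Finset.sum_mul_sum]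
      exact Finset.sum_congr rfl (fun j _ => Finset.sum_congr rfl (fun l _ => by ring))
    rw [e, integral_finset_sum _ (fun j _ => integrable_finset_sum _
      (fun l _ => (int_jl j l).const_mul _))]
    refine Finset.sum_congr rfl (fun j _ => ?_)
    rw [integral_finset_sum _ (fun l _ => (int_jl j l).const_mul _)]
    exact Finset.sum_congr rfl (fun l _ => integral_const_mul _ _)
  rw [cov, key1, itg_sumind μ S hS F c A hA p, itg_sumind μ S hS F c A hA q,
    Finset.sum_mul_sum, ← Finset.sum_sub_distrib]
  refine Finset.sum_congr rfl (fun j _ => ?_)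
  rw [← Finset.sum_sub_distrib]
  refine Finset.sum_congr rfl (fun l _ => ?_)
  rw [cov]
  ring


noncomputable def Dk (k : ℕ) (A : Set E) : ℝ :=
  ⨆ i : ℕ, |(μ (S^[i] ⁻¹' A ∩ S^[k] ⁻¹' (S^[i] ⁻¹' A))).toReal -
    (μ (S^[i] ⁻¹' A)).toReal * (μ (S^[k] ⁻¹' (S^[i] ⁻¹' A))).toReal|



lemma partition {g : E → ℝ} (hg : Measurable g) {M : ℝ} (hgb : ∀ x, |g x| ≤ M)
    {δ : ℝ} (hδ : 0 < δ) :
    ∃ (F : Finset ℤ) (A : ℤ → Set E), (∀ j, MeasurableSet (A j)) ∧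
      (∀ j l, j ≠ l → Disjoint (A j) (A l)) ∧
      (∀ x, |g x - ∑ j ∈ F, (δ * (j:ℝ)) * ind (A j) x| ≤ δ) ∧
      (∀ x, |∑ j ∈ F, (δ * (j:ℝ)) * ind (A j) x| ≤ M + δ) := by
  set J : E → ℤ := fun x => ⌊g x / δ⌋ with hJ
  have hJm : Measurable J := (hg.div_const δ).floor
  refine ⟨Finset.Icc ⌊-M/δ⌋ ⌊M/δ⌋, fun j => J ⁻¹' {j},
    fun j => hJm (measurableSet_singleton j), ?_, ?_, ?_⟩
  · intro j l hne
    rw [Set.disjoint_left]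
    rintro x hxj hxl
    exact hne ((Set.mem_preimage.mp hxj).symm.trans (Set.mem_preimage.mp hxl) : j = l)
  all_goals {
    intro x
    have hmem : J x ∈ Finset.Icc ⌊-M/δ⌋ ⌊M/δ⌋ := by
      rw [Finset.mem_Icc]
      constructor
      · exact Int.floor_le_floor (div_le_div_of_nonneg_right (neg_le_of_abs_le (hgb x)) hδ.le)
      · exact Int.floor_le_floor (div_le_div_of_nonneg_right (le_of_abs_le (hgb x)) hδ.le)
    have hval : (∑ j ∈ Finset.Icc ⌊-M/δ⌋ ⌊M/δ⌋, (δ * (j:ℝ)) * ind (J ⁻¹' {j}) x)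
        = δ * (J x : ℝ) := by
      rw [Finset.sum_eq_single_of_mem (J x) hmem]
      · have : x ∈ J ⁻¹' {J x} := rfl
        simp [ind, Set.indicator_apply, this]
      · intro l _ hne
        have : x ∉ J ⁻¹' {l} := by
          intro hx
          have hxl : J x = l := by simpa using hx
          exact hne hxl.symm
        simp [ind, Set.indicator_apply, this]
    rw [hval]
    have h1 : δ * (J x : ℝ) ≤ g x := by
      have := Int.floor_le (g x / δ)
      calc δ * (J x : ℝ) ≤ δ * (g x / δ) := by
            exact mul_le_mul_of_nonneg_left this hδ.le
        _ = g x := by field_simp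
    have h2 : g x < δ * (J x : ℝ) + δ := by
      have := Int.lt_floor_add_one (g x / δ)
      have h' : g x / δ * δ < ((J x : ℝ) + 1) * δ := by
        exact mul_lt_mul_of_pos_right this hδ
      calc g x = g x / δ * δ := by field_simp
        _ < ((J x : ℝ) + 1) * δ := h'
        _ = δ * (J x : ℝ) + δ := by ring
    · first
      | (rw [abs_le]; constructor <;> nlinarith)
      | (have := abs_le.mp (hgb x); rw [abs_le]; constructor <;> nlinarith)
  }


lemma Dk_nonneg (k : ℕ) (A : Set E) : 0 ≤ Dk μ S k A :=
  Real.iSup_nonneg (fun i => abs_nonneg _)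

include hS in
lemma cov_self_le_Dk (i k : ℕ) {A : Set E} (hA : MeasurableSet A) :
    |cov μ S i (i+k) (ind A) (ind A)| ≤ Dk μ S k A := by
  have hpre : S^[k] ⁻¹' (S^[i] ⁻¹' A) = S^[i+k] ⁻¹' A := by
    rw [← Set.preimage_comp, ← Function.iterate_add]
  have hb : BddAbove (Set.range fun i : ℕ =>
      |(μ (S^[i] ⁻¹' A ∩ S^[k] ⁻¹' (S^[i] ⁻¹' A))).toReal -
        (μ (S^[i] ⁻¹' A)).toReal * (μ (S^[k] ⁻¹' (S^[i] ⁻¹' A))).toReal|) := by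
    refine ⟨2, ?_⟩
    rintro _ ⟨i, rfl⟩
    have h1 := toReal_le_one μ (S^[i] ⁻¹' A ∩ S^[k] ⁻¹' (S^[i] ⁻¹' A))
    have h2 := toReal_le_one μ (S^[i] ⁻¹' A)
    have h3 := toReal_le_one μ (S^[k] ⁻¹' (S^[i] ⁻¹' A))
    have n1 : (0:ℝ) ≤ (μ (S^[i] ⁻¹' A ∩ S^[k] ⁻¹' (S^[i] ⁻¹' A))).toReal := ENNReal.toReal_nonneg
    have n2 : (0:ℝ) ≤ (μ (S^[i] ⁻¹' A)).toReal := ENNReal.toReal_nonneg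
    have n3 : (0:ℝ) ≤ (μ (S^[k] ⁻¹' (S^[i] ⁻¹' A))).toReal := ENNReal.toReal_nonneg
    rw [abs_le]
    constructor <;> nlinarith
  have hle := le_ciSup hb i
  rw [Dk] at *
  refine le_trans ?_ hle
  rw [cov_ind μ S hS i (i+k) hA hA, hpre]



include hS in
lemma cov_tendsto {g : E → ℝ} (hg : Measurable g) {M : ℝ} (hM : 0 ≤ M)
    (hgb : ∀ x, |g x| ≤ M)
    (h1 : ∀ A : Set E, MeasurableSet A → Tendsto (fun k => Dk μ S k A) atTop (nhds 0)) :
    Tendsto (fun k => ⨆ i : ℕ, |cov μ S i (i+k) g g|) atTop (nhds 0) := by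
  rw [Metric.tendsto_atTop]
  intro ε hε
  have h16 : (0:ℝ) < 16*M+16 := by linarith
  set δ : ℝ := min 1 (ε/(16*M+16)) with hδdef
  have hδ : 0 < δ := lt_min one_pos (div_pos hε h16)
  have hδ1 : δ ≤ 1 := min_le_left _ _
  have hδ2 : δ * (16*M+16) ≤ ε := by
    rw [← le_div_iff₀ h16]
    exact min_le_right _ _
  obtain ⟨F, A, hAm, hdisj, happrox, hsb⟩ := partition hg hgb hδ
  set s : E → ℝ := fun x => ∑ j ∈ F, (δ * (j:ℝ)) * ind (A j) x with hsdef
  have hsm : Measurable s :=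
    Finset.measurable_sum F (fun j _ => (ind_meas (hAm j)).const_mul _)
  have hgs : ∀ x, |g x - s x| ≤ δ := happrox
  have hsb' : ∀ x, |s x| ≤ M + δ := hsb
  -- comparison between cov g g and cov s s
  have comp : ∀ i k, |cov μ S i (i+k) g g - cov μ S i (i+k) s s| ≤ ε/4 := by
    intro i k
    have e : cov μ S i (i+k) g g - cov μ S i (i+k) s s
        = cov μ S i (i+k) (fun x => g x - s x) g
          + cov μ S i (i+k) s (fun x => g x - s x) := by
      rw [cov_sub_left μ S hS i (i+k) hg hsm hg hM (by linarith) hgb hsb' hgb,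
        cov_sub_right μ S hS i (i+k) hsm hg hsm hM (by linarith) hsb' hgb hsb']
      ring
    have b1 : |cov μ S i (i+k) (fun x => g x - s x) g| ≤ 2 * (δ * M) :=
      cov_abs_le μ S hS i (i+k) (hg.sub hsm) hg hδ.le hM hgs hgb
    have b2 : |cov μ S i (i+k) s (fun x => g x - s x)| ≤ 2 * ((M+δ) * δ) :=
      cov_abs_le μ S hS i (i+k) hsm (hg.sub hsm) (by linarith) hδ.le hsb' hgs
    have : |cov μ S i (i+k) g g - cov μ S i (i+k) s s| ≤ 2*(δ*M) + 2*((M+δ)*δ) := by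
      rw [e]
      exact (abs_add_le _ _).trans (add_le_add b1 b2)
    refine this.trans ?_
    nlinarith [mul_le_of_le_one_right hδ.le hδ1, mul_nonneg hδ.le hM]
  -- the Ψ sequence
  set Ψ : ℕ → ℝ := fun k => ∑ j ∈ F, ∑ l ∈ F, |δ*(j:ℝ)*(δ*(l:ℝ))|
      * (2*Dk μ S k (A j) + (2*Dk μ S k (A l) + Dk μ S k (A j ∪ A l))) with hΨdef
  have hΨnonneg : ∀ k, 0 ≤ Ψ k := by
    intro k
    refine Finset.sum_nonneg (fun j _ => Finset.sum_nonneg (fun l _ => ?_))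
    have := Dk_nonneg μ S k (A j)
    have := Dk_nonneg μ S k (A l)
    have := Dk_nonneg μ S k (A j ∪ A l)
    positivity
  have hΨ0 : Tendsto Ψ atTop (nhds 0) := by
    rw [hΨdef]
    have : Tendsto (fun k => ∑ j ∈ F, ∑ l ∈ F, |δ*(j:ℝ)*(δ*(l:ℝ))|
        * (2*Dk μ S k (A j) + (2*Dk μ S k (A l) + Dk μ S k (A j ∪ A l)))) atTop
        (nhds (∑ j ∈ F, ∑ l ∈ F, (0:ℝ))) := by
      refine tendsto_finset_sum _ (fun j _ => ?_)
      refine tendsto_finset_sum _ (fun l _ => ?_)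
      have t : Tendsto (fun k => 2*Dk μ S k (A j) + (2*Dk μ S k (A l)
          + Dk μ S k (A j ∪ A l))) atTop (nhds (2*0 + (2*0 + 0))) :=
        (((h1 _ (hAm j)).const_mul 2).add (((h1 _ (hAm l)).const_mul 2).add
          (h1 _ ((hAm j).union (hAm l)))))
      have := t.const_mul (|δ*(j:ℝ)*(δ*(l:ℝ))|)
      simpa using this
    simpa using this
  -- per-pair bound
  have pair : ∀ (i k : ℕ) (j l : ℤ),
      |cov μ S i (i+k) (ind (A j)) (ind (A l)) + cov μ S i (i+k) (ind (A l)) (ind (A j))|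
        ≤ 2*Dk μ S k (A j) + (2*Dk μ S k (A l) + Dk μ S k (A j ∪ A l)) := by
    intro i k j l
    by_cases hjl : j = l
    · subst hjl
      have h := cov_self_le_Dk μ S hS i k (hAm j)
      have h2 := Dk_nonneg μ S k (A j ∪ A j)
      have h3 := Dk_nonneg μ S k (A j)
      calc |cov μ S i (i+k) (ind (A j)) (ind (A j)) + cov μ S i (i+k) (ind (A j)) (ind (A j))|
          ≤ |cov μ S i (i+k) (ind (A j)) (ind (A j))| + |cov μ S i (i+k) (ind (A j)) (ind (A j))| :=
            abs_add_le _ _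
        _ ≤ 2*Dk μ S k (A j) + (2*Dk μ S k (A j) + Dk μ S k (A j ∪ A j)) := by linarith
    · have hd := hdisj j l hjl
      have hu := cov_union μ S hS i (i+k) (hAm j) (hAm l) hd
      have e : cov μ S i (i+k) (ind (A j)) (ind (A l)) + cov μ S i (i+k) (ind (A l)) (ind (A j))
          = cov μ S i (i+k) (ind (A j ∪ A l)) (ind (A j ∪ A l))
            - cov μ S i (i+k) (ind (A j)) (ind (A j))
            - cov μ S i (i+k) (ind (A l)) (ind (A l)) := by linarith
      rw [e]
      have b1 := cov_self_le_Dk μ S hS i k ((hAm j).union (hAm l))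
      have b2 := cov_self_le_Dk μ S hS i k (hAm j)
      have b3 := cov_self_le_Dk μ S hS i k (hAm l)
      have := abs_sub (cov μ S i (i+k) (ind (A j ∪ A l)) (ind (A j ∪ A l))
        - cov μ S i (i+k) (ind (A j)) (ind (A j))) (cov μ S i (i+k) (ind (A l)) (ind (A l)))
      have h4 := abs_sub (cov μ S i (i+k) (ind (A j ∪ A l)) (ind (A j ∪ A l)))
        (cov μ S i (i+k) (ind (A j)) (ind (A j)))
      have n1 := Dk_nonneg μ S k (A j)
      have n2 := Dk_nonneg μ S k (A l)
      linarith
  -- |cov s s| ≤ Ψ k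
  have hcovs : ∀ i k, |cov μ S i (i+k) s s| ≤ Ψ k := by
    intro i k
    have hexp := cov_sumind μ S hS F (fun j => δ * (j:ℝ)) A hAm i (i+k)
    have swap : (∑ j ∈ F, ∑ l ∈ F, ((δ*(j:ℝ)) * (δ*(l:ℝ)))
          * cov μ S i (i+k) (ind (A j)) (ind (A l)))
        = ∑ j ∈ F, ∑ l ∈ F, ((δ*(l:ℝ)) * (δ*(j:ℝ)))
          * cov μ S i (i+k) (ind (A l)) (ind (A j)) := by rw [Finset.sum_comm]
    have h2cov : 2 * cov μ S i (i+k) s s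
        = ∑ j ∈ F, ∑ l ∈ F, ((δ*(j:ℝ)) * (δ*(l:ℝ)))
            * (cov μ S i (i+k) (ind (A j)) (ind (A l))
              + cov μ S i (i+k) (ind (A l)) (ind (A j))) := by
      have : cov μ S i (i+k) s s = ∑ j ∈ F, ∑ l ∈ F, ((δ*(j:ℝ)) * (δ*(l:ℝ)))
          * cov μ S i (i+k) (ind (A j)) (ind (A l)) := hexp
      rw [two_mul, this]
      nth_rewrite 2 [swap]
      rw [← Finset.sum_add_distrib]
      refine Finset.sum_congr rfl (fun j _ => ?_)
      rw [← Finset.sum_add_distrib]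
      refine Finset.sum_congr rfl (fun l _ => ?_)
      ring
    have habs : |2 * cov μ S i (i+k) s s| ≤ Ψ k := by
      rw [h2cov, hΨdef]
      refine (Finset.abs_sum_le_sum_abs _ _).trans ?_
      refine Finset.sum_le_sum (fun j _ => ?_)
      refine (Finset.abs_sum_le_sum_abs _ _).trans ?_
      refine Finset.sum_le_sum (fun l _ => ?_)
      rw [abs_mul]
      exact mul_le_mul_of_nonneg_left (pair i k j l) (abs_nonneg _)
    rw [abs_mul, abs_two] at habs
    have := hΨnonneg k
    linarith
  -- conclude
  have hev := (hΨ0.eventually (eventually_abs_sub_lt 0 (by linarith : (0:ℝ) < ε/4)))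
  rw [eventually_atTop] at hev
  obtain ⟨K, hK⟩ := hev
  refine ⟨K, fun k hk => ?_⟩
  have hΨk : Ψ k < ε/4 := by
    have := hK k hk
    rw [sub_zero] at this
    calc Ψ k ≤ |Ψ k| := le_abs_self _
      _ < ε/4 := this
  have hsup : (⨆ i : ℕ, |cov μ S i (i+k) g g|) ≤ ε/2 := by
    refine ciSup_le (fun i => ?_)
    have := comp i k
    have h2 := hcovs i k
    have : |cov μ S i (i+k) g g| ≤ |cov μ S i (i+k) g g - cov μ S i (i+k) s s|
        + |cov μ S i (i+k) s s| := by
      have := abs_sub_abs_le_abs_sub (cov μ S i (i+k) g g) (cov μ S i (i+k) s s)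
      have h3 := abs_sub (cov μ S i (i+k) g g) (cov μ S i (i+k) s s)
      calc |cov μ S i (i+k) g g|
          = |cov μ S i (i+k) g g - cov μ S i (i+k) s s + cov μ S i (i+k) s s| := by ring_nf
        _ ≤ _ := abs_add_le _ _
    linarith [comp i k, hcovs i k]
  rw [Real.dist_eq, sub_zero]
  have hnn : 0 ≤ ⨆ i : ℕ, |cov μ S i (i+k) g g| := Real.iSup_nonneg (fun i => abs_nonneg _)
  rw [abs_of_nonneg hnn]
  linarith



include hS in
lemma itg_tendsto (ν : Measure E) [IsProbabilityMeasure ν] {g : E → ℝ} (hg : Measurable g)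
    {M : ℝ} (hgb : ∀ x, |g x| ≤ M)
    (h2 : ∀ A : Set E, MeasurableSet A →
      Tendsto (fun k : ℕ => μ (S^[k] ⁻¹' A)) atTop (nhds (ν A))) :
    Tendsto (fun p => itg μ S p g) atTop (nhds (∫ y, g y ∂ν)) := by
  rw [Metric.tendsto_atTop]
  intro ε hε
  have hδ : (0:ℝ) < ε/4 := by linarith
  obtain ⟨F, A, hAm, hdisj, happrox, hsb⟩ := partition hg hgb hδ
  set δ : ℝ := ε/4 with hδdef
  set s : E → ℝ := fun x => ∑ j ∈ F, (δ * (j:ℝ)) * ind (A j) x with hsdef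
  have hsm : Measurable s :=
    Finset.measurable_sum F (fun j _ => (ind_meas (hAm j)).const_mul _)
  -- itg of s
  have keyA : ∀ p, itg μ S p s = ∑ j ∈ F, (δ * (j:ℝ)) * (μ (S^[p] ⁻¹' A j)).toReal := by
    intro p
    rw [hsdef, itg_sumind μ S hS F _ A hAm p]
    exact Finset.sum_congr rfl (fun j _ => by rw [itg_ind μ S hS p (hAm j)])
  -- ∫ s dν
  have keyB : (∫ y, s y ∂ν) = ∑ j ∈ F, (δ * (j:ℝ)) * (ν (A j)).toReal := by
    rw [hsdef]
    rw [integral_finset_sum _ (fun j _ =>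
      (integrable_of_bdd ν (ind_meas (hAm j)) (ind_bdd (A j))).const_mul _)]
    refine Finset.sum_congr rfl (fun j _ => ?_)
    rw [integral_const_mul, ind, integral_indicator_const (1:ℝ) (hAm j)]
    simp
    exact Or.inl rfl
  -- convergence of the simple part
  have T : Tendsto (fun p => ∑ j ∈ F, (δ * (j:ℝ)) * (μ (S^[p] ⁻¹' A j)).toReal)
      atTop (nhds (∑ j ∈ F, (δ * (j:ℝ)) * (ν (A j)).toReal)) := by
    refine tendsto_finset_sum _ (fun j _ => ?_)
    exact (((ENNReal.tendsto_toReal (measure_ne_top ν (A j))).comp (h2 (A j) (hAm j)))).const_mul _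
  have hev := (Metric.tendsto_atTop.mp T) δ hδ
  obtain ⟨N, hN⟩ := hev
  refine ⟨N, fun p hp => ?_⟩
  have e1 : |itg μ S p g - itg μ S p s| ≤ δ := by
    rw [← itg_sub μ S hS p hg hsm hgb hsb]
    exact itg_bound μ S hS p (hg.sub hsm) happrox
  have e2 : |(∫ y, g y ∂ν) - ∫ y, s y ∂ν| ≤ δ := by
    rw [← integral_sub (integrable_of_bdd ν hg hgb) (integrable_of_bdd ν hsm hsb)]
    have : ‖∫ y, g y - s y ∂ν‖ ≤ δ * (ν univ).toReal :=
      norm_integral_le_of_norm_le_const (ae_of_all _ fun y => by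
        simpa [Real.norm_eq_abs] using happrox y)
    simpa [Real.norm_eq_abs] using this
  have e3 : |itg μ S p s - ∫ y, s y ∂ν| < δ := by
    rw [keyA, keyB]
    have := hN p hp
    rwa [Real.dist_eq] at this
  rw [Real.dist_eq]
  calc |itg μ S p g - ∫ y, g y ∂ν|
      = |(itg μ S p g - itg μ S p s) + (itg μ S p s - ∫ y, s y ∂ν)
          + ((∫ y, s y ∂ν) - ∫ y, g y ∂ν)| := by ring_nf
    _ ≤ |(itg μ S p g - itg μ S p s) + (itg μ S p s - ∫ y, s y ∂ν)|
          + |(∫ y, s y ∂ν) - ∫ y, g y ∂ν| := abs_add_le _ _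
    _ ≤ |itg μ S p g - itg μ S p s| + |itg μ S p s - ∫ y, s y ∂ν|
          + |(∫ y, s y ∂ν) - ∫ y, g y ∂ν| := by
            have := abs_add_le (itg μ S p g - itg μ S p s) (itg μ S p s - ∫ y, s y ∂ν)
            linarith
    _ < δ + δ + δ := by
        have : |(∫ y, s y ∂ν) - ∫ y, g y ∂ν| = |(∫ y, g y ∂ν) - ∫ y, s y ∂ν| := abs_sub_comm _ _
        linarith
    _ < ε := by rw [hδdef]; linarith


lemma count_bound (φ : ℕ → ℝ) (hφ : ∀ d, 0 ≤ φ d) (n : ℕ) :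
    ∑ i ∈ Finset.range n, ∑ j ∈ Finset.range n, φ (Nat.dist i j) ≤ 2 * n * ∑ d ∈ Finset.range n, φ d := by
  have inner : ∀ i ∈ Finset.range n, ∑ j ∈ Finset.range n, φ (Nat.dist i j) ≤ 2 * ∑ d ∈ Finset.range n, φ d := by
    intro i hi
    rw [← Finset.sum_filter_add_sum_filter_not (Finset.range n) (· ≤ i) (fun j => φ (Nat.dist i j))]
    have part1 : ∑ j ∈ (Finset.range n).filter (· ≤ i), φ (Nat.dist i j) ≤ ∑ d ∈ Finset.range n, φ d := by
      have e : ∑ j ∈ (Finset.range n).filter (· ≤ i), φ (Nat.dist i j)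
          = ∑ j ∈ (Finset.range n).filter (· ≤ i), φ (i - j) :=
        Finset.sum_congr rfl (fun j hj => by
          rw [Nat.dist_eq_sub_of_le_right (Finset.mem_filter.mp hj).2])
      rw [e, ← Finset.sum_image (f := φ) (g := fun j => i - j)
        (fun a ha b hb hab => by
          have ha' := (Finset.mem_filter.mp ha).2
          have hb' := (Finset.mem_filter.mp hb).2
          simp only at hab
          omega)]
      refine Finset.sum_le_sum_of_subset_of_nonneg ?_ (fun d _ _ => hφ d)
      intro d hd
      rw [Finset.mem_image] at hd
      obtain ⟨j, hj, rfl⟩ := hd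
      have hin := Finset.mem_range.mp hi
      have hji := (Finset.mem_filter.mp hj).2
      exact Finset.mem_range.mpr (by omega)
    have part2 : ∑ j ∈ (Finset.range n).filter (fun j => ¬ j ≤ i), φ (Nat.dist i j)
        ≤ ∑ d ∈ Finset.range n, φ d := by
      have e : ∑ j ∈ (Finset.range n).filter (fun j => ¬ j ≤ i), φ (Nat.dist i j)
          = ∑ j ∈ (Finset.range n).filter (fun j => ¬ j ≤ i), φ (j - i) :=
        Finset.sum_congr rfl (fun j hj => by
          have := (Finset.mem_filter.mp hj).2
          rw [Nat.dist_eq_sub_of_le (by omega)])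
      rw [e, ← Finset.sum_image (f := φ) (g := fun j => j - i)
        (fun a ha b hb hab => by
          have ha' := (Finset.mem_filter.mp ha).2
          have hb' := (Finset.mem_filter.mp hb).2
          simp only at hab
          omega)]
      refine Finset.sum_le_sum_of_subset_of_nonneg ?_ (fun d _ _ => hφ d)
      intro d hd
      rw [Finset.mem_image] at hd
      obtain ⟨j, hj, rfl⟩ := hd
      have := Finset.mem_range.mp (Finset.mem_filter.mp hj).1
      exact Finset.mem_range.mpr (by omega)
    linarith
  calc ∑ i ∈ Finset.range n, ∑ j ∈ Finset.range n, φ (Nat.dist i j)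
      ≤ ∑ _i ∈ Finset.range n, 2 * ∑ d ∈ Finset.range n, φ d := Finset.sum_le_sum inner
    _ = 2 * n * ∑ d ∈ Finset.range n, φ d := by
        rw [Finset.sum_const, Finset.card_range, nsmul_eq_mul]; ring

end Stmt17
open Stmt17 in
/-- Proposition 3.3: under the uniform mixing-type assumption (1) and asymptotic
stationarity with limit `ν` (2), the measures `μₙ(A) = μ{x : (S(x),…,Sⁿ(x)) ∈ A}`
satisfy `∫ |(Xₙ − ν)g|² dμₙ → 0` for every `g ∈ C_b(E)`. -/
theorem stmt_17 {E : Type*} [MetricSpace E] [TopologicalSpace.SeparableSpace E]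
    [MeasurableSpace E] [BorelSpace E]
    (μ ν : Measure E) [IsProbabilityMeasure μ]
    (S : E → E) (hS : Measurable S)
    (h1 : ∀ A : Set E, MeasurableSet A →
      Tendsto (fun k : ℕ => ⨆ i : ℕ,
        |(μ (S^[i] ⁻¹' A ∩ S^[k] ⁻¹' (S^[i] ⁻¹' A))).toReal -
          (μ (S^[i] ⁻¹' A)).toReal * (μ (S^[k] ⁻¹' (S^[i] ⁻¹' A))).toReal|)
        atTop (nhds 0))
    (h2 : ∀ A : Set E, MeasurableSet A →
      Tendsto (fun k : ℕ => μ (S^[k] ⁻¹' A)) atTop (nhds (ν A)))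
    (μn : ∀ n : ℕ, Measure (Fin n → E))
    (hμn : ∀ n, ∀ A : Set (Fin n → E), MeasurableSet A →
      μn n A = μ {x : E | (fun i : Fin n => S^[(i : ℕ) + 1] x) ∈ A}) :
    ∀ g : BoundedContinuousFunction E ℝ,
      Tendsto (fun n : ℕ =>
          ∫ x : Fin n → E,
            |(1 / (n : ℝ)) * ∑ i : Fin n, g (x i) - ∫ y, g y ∂ν| ^ 2 ∂μn n)
        atTop (nhds 0) := by
  intro g
  -- ν is a probability measure
  have hν1 : ν univ = 1 := by
    have ht := h2 univ MeasurableSet.univ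
    have hc : Tendsto (fun k : ℕ => μ (S^[k] ⁻¹' univ)) atTop (nhds 1) := by
      simpa using (tendsto_const_nhds : Tendsto (fun _ : ℕ => μ univ) atTop (nhds (μ univ)))
    exact (tendsto_nhds_unique ht hc)
  haveI : IsProbabilityMeasure ν := ⟨hν1⟩
  set c : ℝ := ∫ y, g y ∂ν with hc
  set M : ℝ := ‖g‖ with hM
  have hMnn : 0 ≤ M := norm_nonneg _
  have hgm : Measurable (g : E → ℝ) := g.continuous.measurable
  have hgb : ∀ x, |(g : E → ℝ) x| ≤ M := fun x => by
    simpa [Real.norm_eq_abs] using g.norm_coe_le_norm x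
  -- reduction to integrals over μ
  have reduce : (fun n : ℕ => ∫ x : Fin n → E,
        |(1 / (n : ℝ)) * ∑ i : Fin n, g (x i) - c| ^ 2 ∂μn n)
      = fun n : ℕ => ∫ x : E,
          ((1 / (n : ℝ)) * ∑ i ∈ Finset.range n, g (S^[i+1] x) - c) ^ 2 ∂μ := by
    funext n
    set T : E → (Fin n → E) := fun x i => S^[(i : ℕ) + 1] x with hT
    have hTm : Measurable T := measurable_pi_lambda _ (fun i => hS.iterate _)
    have hmap : μn n = Measure.map T μ := by
      refine Measure.ext fun A hA => ?_
      rw [hμn n A hA, Measure.map_apply hTm hA]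
      rfl
    have hFm : Measurable (fun v : Fin n → E =>
        |(1 / (n : ℝ)) * ∑ i : Fin n, g (v i) - c| ^ 2) := by
      apply Measurable.pow_const
      apply Measurable.abs
      exact ((measurable_const.mul (Finset.measurable_sum _
        (fun i _ => hgm.comp (measurable_pi_apply i)))).sub measurable_const)
    rw [hmap, integral_map hTm.aemeasurable hFm.aestronglyMeasurable]
    refine integral_congr_ae (ae_of_all _ fun x => ?_)
    simp only [hT, sq_abs]
    rw [Fin.sum_univ_eq_sum_range (fun k => g (S^[k+1] x)) n]
  rw [reduce]
  -- notation
  set a : ℕ → ℝ := fun p => itg μ S p g with ha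
  set b : ℕ → ℝ := fun p => a p - c with hb
  set φ : ℕ → ℝ := fun k => ⨆ i : ℕ, |cov μ S i (i+k) g g| with hφ
  have hφnn : ∀ k, 0 ≤ φ k := fun k => Real.iSup_nonneg (fun i => abs_nonneg _)
  have hφ0 : Tendsto φ atTop (nhds 0) :=
    cov_tendsto μ S hS hgm hMnn hgb (fun A hA => h1 A hA)
  have hφle : ∀ p q : ℕ, |cov μ S p q g g| ≤ φ (Nat.dist p q) := by
    have hbdd : ∀ k, BddAbove (Set.range fun i : ℕ => |cov μ S i (i+k) g g|) := by
      intro k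
      refine ⟨2 * (M * M), ?_⟩
      rintro _ ⟨i, rfl⟩
      exact cov_abs_le μ S hS i (i+k) hgm hgm hMnn hMnn hgb hgb
    intro p q
    rcases le_total p q with hpq | hqp
    · have : q = p + (q - p) := by omega
      rw [Nat.dist_eq_sub_of_le hpq, this]
      have := le_ciSup (hbdd (q - p)) p
      simpa using this
    · have : p = q + (p - q) := by omega
      rw [Nat.dist_eq_sub_of_le_right hqp, cov_comm, this]
      have := le_ciSup (hbdd (p - q)) q
      simpa using this
  have hbten : Tendsto (fun i : ℕ => b (i+1)) atTop (nhds 0) := by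
    have h0 : Tendsto a atTop (nhds c) := itg_tendsto μ S hS ν hgm hgb h2
    have h1' : Tendsto b atTop (nhds 0) := by
      rw [hb]
      simpa using (h0.sub_const c)
    exact h1'.comp (tendsto_add_atTop_nat 1)
  -- per-n bound, n ≥ 1
  have key : ∀ n : ℕ, 1 ≤ n →
      (∫ x : E, ((1 / (n : ℝ)) * ∑ i ∈ Finset.range n, g (S^[i+1] x) - c) ^ 2 ∂μ)
        ≤ 2 * ((1/(n:ℝ)) * ∑ d ∈ Finset.range n, φ d)
          + ((1/(n:ℝ)) * ∑ i ∈ Finset.range n, b (i+1)) ^ 2 := by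
    intro n hn
    have hn0 : (n:ℝ) ≠ 0 := Nat.cast_ne_zero.mpr (by omega)
    have hnpos : (0:ℝ) < n := by positivity
    set Z : ℕ → E → ℝ := fun p x => g (S^[p] x) - a p with hZ
    have haM : ∀ p, |a p| ≤ M := fun p => itg_bound μ S hS p hgm hgb
    have hZm : ∀ p, Measurable (Z p) := fun p => (hgm.comp (hS.iterate p)).sub measurable_const
    have hZb : ∀ p x, |Z p x| ≤ 2*M := by
      intro p x
      have h1' := hgb (S^[p] x)
      have h2' := haM p
      have h3' := abs_sub (g (S^[p] x)) (a p)
      show |g (S^[p] x) - a p| ≤ 2*M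
      linarith
    set X : E → ℝ := fun x => (1/(n:ℝ)) * ∑ i ∈ Finset.range n, Z (i+1) x with hX
    set β : ℝ := (1/(n:ℝ)) * ∑ i ∈ Finset.range n, b (i+1) with hβ
    have hXm : Measurable X :=
      (Finset.measurable_sum _ (fun i _ => hZm (i+1))).const_mul _
    have hXb : ∀ x, |X x| ≤ 2*M := by
      intro x
      rw [hX]
      simp only
      rw [abs_mul]
      have h1' : |∑ i ∈ Finset.range n, Z (i+1) x| ≤ ∑ i ∈ Finset.range n, (2*M) :=
        (Finset.abs_sum_le_sum_abs _ _).trans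
          (Finset.sum_le_sum (fun i _ => hZb (i+1) x))
      rw [Finset.sum_const, Finset.card_range, nsmul_eq_mul] at h1'
      have : |1/(n:ℝ)| = 1/(n:ℝ) := abs_of_pos (by positivity)
      rw [this]
      calc 1/(n:ℝ) * |∑ i ∈ Finset.range n, Z (i+1) x|
          ≤ 1/(n:ℝ) * ((n:ℝ) * (2*M)) := by
            exact mul_le_mul_of_nonneg_left h1' (by positivity)
        _ = 2*M := by field_simp
    -- pointwise identity
    have e0 : ∀ x : E, ((1 / (n : ℝ)) * ∑ i ∈ Finset.range n, g (S^[i+1] x) - c)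
        = X x + β := by
      intro x
      rw [hX, hβ]
      simp only
      rw [hZ]
      simp only
      rw [Finset.sum_sub_distrib, hb]
      simp only
      rw [Finset.sum_sub_distrib, Finset.sum_const, Finset.card_range, nsmul_eq_mul]
      field_simp
      try ring
    -- integral decomposition
    have intZ : ∀ p, Integrable (Z p) μ := fun p => by
      rw [hZ]
      exact (integrable_comp μ S hS p hgm hgb).sub (integrable_const _)
    have intZZ : ∀ p q, Integrable (fun x => Z p x * Z q x) μ := fun p q =>
      integrable_of_bdd μ ((hZm p).mul (hZm q)) (M := (2*M)*(2*M)) (fun x => by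
        have := mul_le_mul (hZb p x) (hZb q x) (abs_nonneg _) (by linarith)
        simpa [abs_mul] using this)
    have intX : Integrable X μ := integrable_of_bdd μ hXm hXb
    have intX2 : Integrable (fun x => X x ^ 2) μ :=
      integrable_of_bdd μ (hXm.pow_const 2) (M := (2*M)^2) (fun x => by
        rw [abs_pow]
        exact pow_le_pow_left₀ (abs_nonneg _) (hXb x) 2)
    have hiZ : ∀ p, (∫ x, Z p x ∂μ) = 0 := by
      intro p
      rw [hZ]
      simp only
      rw [integral_sub (integrable_comp μ S hS p hgm hgb) (integrable_const _)]
      rw [integral_const]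
      simp [ha, itg]
    have hiX : (∫ x, X x ∂μ) = 0 := by
      rw [hX]
      simp only
      rw [integral_const_mul, integral_finset_sum _ (fun i _ => intZ (i+1))]
      simp [hiZ]
    have hiZZ : ∀ p q, (∫ x, Z p x * Z q x ∂μ) = cov μ S p q g g := by
      intro p q
      have e : (fun x => Z p x * Z q x)
          = fun x => (g (S^[p] x) * g (S^[q] x) - a p * g (S^[q] x))
            - (a q * g (S^[p] x) - a p * a q) := by
        funext x
        rw [hZ]
        simp only
        ring
      have i1 : Integrable (fun x => g (S^[p] x) * g (S^[q] x)) μ :=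
        integrable_comp_mul μ S hS p q hgm hgm hMnn hgb hgb
      have i2 : Integrable (fun x => a p * g (S^[q] x)) μ :=
        (integrable_comp μ S hS q hgm hgb).const_mul _
      have i3 : Integrable (fun x => a q * g (S^[p] x)) μ :=
        (integrable_comp μ S hS p hgm hgb).const_mul _
      have i4 : Integrable (fun _ : E => a p * a q) μ := integrable_const _
      have i12 : Integrable (fun x => g (S^[p] x) * g (S^[q] x) - a p * g (S^[q] x)) μ := by
        exact i1.sub i2
      have i34 : Integrable (fun x => a q * g (S^[p] x) - a p * a q) μ := by
        exact i3.sub i4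
      rw [e, integral_sub i12 i34, integral_sub i1 i2, integral_sub i3 i4,
        integral_const_mul, integral_const_mul, integral_const]
      simp only [measure_univ, probReal_univ, ENNReal.toReal_one, smul_eq_mul, one_mul]
      rw [cov]
      have e2 : (∫ x, g (S^[q] x) ∂μ) = a q := rfl
      have e3 : (∫ x, g (S^[p] x) ∂μ) = a p := rfl
      rw [e2, e3]
      have e4 : itg μ S p g = a p := rfl
      have e5 : itg μ S q g = a q := rfl
      rw [e4, e5]
      ring
    have hiX2 : (∫ x, X x ^ 2 ∂μ)
        = (1/(n:ℝ))^2 * ∑ i ∈ Finset.range n, ∑ j ∈ Finset.range n,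
            cov μ S (i+1) (j+1) g g := by
      have e : (fun x => X x ^ 2) = fun x => (1/(n:ℝ))^2
          * ∑ i ∈ Finset.range n, ∑ j ∈ Finset.range n, Z (i+1) x * Z (j+1) x := by
        funext x
        rw [hX]
        simp only
        rw [mul_pow, pow_two (∑ i ∈ Finset.range n, Z (i+1) x), Finset.sum_mul_sum]
      rw [e, integral_const_mul, integral_finset_sum _ (fun i _ =>
        integrable_finset_sum _ (fun j _ => intZZ (i+1) (j+1)))]
      congr 1
      refine Finset.sum_congr rfl (fun i _ => ?_)
      rw [integral_finset_sum _ (fun j _ => intZZ (i+1) (j+1))]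
      exact Finset.sum_congr rfl (fun j _ => hiZZ (i+1) (j+1))
    -- put together
    have edecomp : (∫ x : E, ((1 / (n : ℝ)) * ∑ i ∈ Finset.range n, g (S^[i+1] x) - c) ^ 2 ∂μ)
        = (∫ x, X x ^ 2 ∂μ) + β ^ 2 := by
      have e : (fun x : E => ((1 / (n : ℝ)) * ∑ i ∈ Finset.range n, g (S^[i+1] x) - c) ^ 2)
          = fun x => X x ^ 2 + (2 * β * X x + β ^ 2) := by
        funext x
        rw [e0 x]
        ring
      have iA : Integrable (fun x => 2 * β * X x) μ := intX.const_mul _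
      have iB : Integrable (fun x => 2 * β * X x + β ^ 2) μ := by
        exact iA.add (integrable_const _)
      rw [e, integral_add intX2 iB, integral_add iA (integrable_const _),
        integral_const_mul, hiX, integral_const]
      simp [measure_univ]
    rw [edecomp, hiX2]
    have hsum : (∑ i ∈ Finset.range n, ∑ j ∈ Finset.range n, cov μ S (i+1) (j+1) g g)
        ≤ 2 * n * ∑ d ∈ Finset.range n, φ d := by
      calc (∑ i ∈ Finset.range n, ∑ j ∈ Finset.range n, cov μ S (i+1) (j+1) g g)
          ≤ ∑ i ∈ Finset.range n, ∑ j ∈ Finset.range n, φ (Nat.dist i j) := by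
            refine Finset.sum_le_sum (fun i _ => Finset.sum_le_sum (fun j _ => ?_))
            have h' := hφle (i+1) (j+1)
            rw [Nat.dist_add_add_right] at h'
            exact (le_abs_self _).trans h'
        _ ≤ 2 * n * ∑ d ∈ Finset.range n, φ d := count_bound φ hφnn n
    have hc2 : (1/(n:ℝ))^2 * (2 * n * ∑ d ∈ Finset.range n, φ d)
        = 2 * ((1/(n:ℝ)) * ∑ d ∈ Finset.range n, φ d) := by
      field_simp
    have := mul_le_mul_of_nonneg_left hsum (by positivity : (0:ℝ) ≤ (1/(n:ℝ))^2)
    rw [hc2] at this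
    linarith
  -- limits of the upper bound
  have hU : Tendsto (fun n : ℕ => 2 * ((1/(n:ℝ)) * ∑ d ∈ Finset.range n, φ d)
      + ((1/(n:ℝ)) * ∑ i ∈ Finset.range n, b (i+1)) ^ 2) atTop (nhds 0) := by
    have t1 : Tendsto (fun n : ℕ => (1/(n:ℝ)) * ∑ d ∈ Finset.range n, φ d) atTop (nhds 0) := by
      have := hφ0.cesaro
      simpa [one_div] using this
    have t2 : Tendsto (fun n : ℕ => (1/(n:ℝ)) * ∑ i ∈ Finset.range n, b (i+1)) atTop
        (nhds 0) := by
      have := hbten.cesaro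
      simpa [one_div] using this
    have := (t1.const_mul 2).add ((t2.pow 2))
    simpa using this
  -- squeeze
  refine tendsto_of_tendsto_of_tendsto_of_le_of_le' tendsto_const_nhds hU ?_ ?_
  · exact Eventually.of_forall (fun n => integral_nonneg (fun x => sq_nonneg _))
  · rw [eventually_atTop]
    exact ⟨1, key⟩
end

section
/- Under the assumptions of the previous statement (conditions (1) and (2) on (E, B(E), μ, S) with stationary limit ν), for the special case g = χ_{E_1} the indicator of a Borel set E_1, one has ∫_{E^n} |(1/n)∑_{i=1}^n χ_{E_1}(x_i) − ν(E_1)|² dμ_n = (2/n²)∑_{1≤i<j≤n} μ(S^{-i}E_1 ∩ S^{-j}E_1) + (1/n²)∑_{i=1}^n μ(S^{-i}E_1) − (2ν(E_1)/n)∑_{i=1}^n μ(S^{-i}E_1) + ν(E_1)², and this quantity tends to 0 as n → ∞. -/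
open MeasureTheory Filter Set

private lemma sum_shift_aux (f : ℕ → ℝ) (n : ℕ) :
    ∑ i ∈ Finset.Icc 1 n, f i = ∑ i ∈ Finset.range n, f (i + 1) := by
  rw [← Finset.Ico_add_one_right_eq_Icc, Finset.sum_Ico_eq_sum_range]
  exact Finset.sum_congr rfl fun i _ => by rw [add_comm]

private lemma fin_sum_shift_aux (f : ℕ → ℝ) (n : ℕ) :
    ∑ i : Fin n, f ((i : ℕ) + 1) = ∑ i ∈ Finset.Icc 1 n, f i := by
  rw [sum_shift_aux, Fin.sum_univ_eq_sum_range (fun k => f (k + 1)) n]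

private lemma split_sum_aux (n : ℕ) (m : ℕ → ℕ → ℝ) (hsym : ∀ i j, m i j = m j i) :
    ∑ i ∈ Finset.Icc 1 n, ∑ j ∈ Finset.Icc 1 n, m i j =
      ∑ i ∈ Finset.Icc 1 n, m i i +
        2 * ∑ i ∈ Finset.Icc 1 n, ∑ j ∈ Finset.Ioc i n, m i j := by
  have hIcc : Finset.Icc 1 n = Finset.Ioc 0 n := (Finset.Icc_add_one_left_eq_Ioc 0 n)
  rw [hIcc]
  have step1 : ∑ i ∈ Finset.Ioc 0 n, ∑ j ∈ Finset.Ioc 0 n, m i j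
      = ∑ i ∈ Finset.Ioc 0 n,
          (∑ j ∈ Finset.Ioc 0 i, m i j + ∑ j ∈ Finset.Ioc i n, m i j) := by
    refine Finset.sum_congr rfl fun i hi => ?_
    rw [Finset.sum_Ioc_consecutive _ (Nat.zero_le i) (Finset.mem_Ioc.mp hi).2]
  rw [step1, Finset.sum_add_distrib]
  have step2 : ∑ i ∈ Finset.Ioc 0 n, ∑ j ∈ Finset.Ioc 0 i, m i j
      = ∑ i ∈ Finset.Ioc 0 n, (m i i + ∑ j ∈ Finset.Ioo 0 i, m i j) := by
    refine Finset.sum_congr rfl fun i hi => ?_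
    rw [← Finset.Ioo_insert_right (Finset.mem_Ioc.mp hi).1,
      Finset.sum_insert Finset.right_notMem_Ioo]
  rw [step2, Finset.sum_add_distrib]
  have step3 : ∑ i ∈ Finset.Ioc 0 n, ∑ j ∈ Finset.Ioo 0 i, m i j
      = ∑ i ∈ Finset.Ioc 0 n, ∑ j ∈ Finset.Ioc i n, m i j := by
    rw [Finset.sum_comm' (s' := fun y => Finset.Ioc y n) (t' := Finset.Ioc 0 n)
      (fun x y => by
        simp only [Finset.mem_Ioc, Finset.mem_Ioo]
        omega)]
    exact Finset.sum_congr rfl fun j _ => Finset.sum_congr rfl fun i _ => hsym i j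
  rw [step3]; ring

private lemma integral_sq_sum_aux {E : Type*} [MeasurableSpace E] (μ : Measure E)
    [IsProbabilityMeasure μ] (s : Finset ℕ) (A : ℕ → Set E)
    (hA : ∀ i, MeasurableSet (A i)) (r c : ℝ) :
    ∫ x, (r * ∑ i ∈ s, (A i).indicator (fun _ => (1 : ℝ)) x - c) ^ 2 ∂μ =
      r ^ 2 * ∑ i ∈ s, ∑ j ∈ s, (μ (A i ∩ A j)).toReal
        - 2 * c * r * ∑ i ∈ s, (μ (A i)).toReal + c ^ 2 := by
  have hint : ∀ B : Set E, MeasurableSet B →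
      Integrable (B.indicator (fun _ => (1 : ℝ))) μ :=
    fun B hB => (integrable_const 1).indicator hB
  have hptw : ∀ x, (r * ∑ i ∈ s, (A i).indicator (fun _ => (1 : ℝ)) x - c) ^ 2
      = r ^ 2 * ∑ i ∈ s, ∑ j ∈ s, (A i ∩ A j).indicator (fun _ => (1 : ℝ)) x
        - 2 * c * r * ∑ i ∈ s, (A i).indicator (fun _ => (1 : ℝ)) x + c ^ 2 := by
    intro x
    have key : ∑ i ∈ s, ∑ j ∈ s, (A i ∩ A j).indicator (fun _ => (1 : ℝ)) x
        = (∑ i ∈ s, (A i).indicator (fun _ => (1 : ℝ)) x) *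
            (∑ j ∈ s, (A j).indicator (fun _ => (1 : ℝ)) x) := by
      rw [Finset.sum_mul_sum]
      refine Finset.sum_congr rfl fun i _ => Finset.sum_congr rfl fun j _ => ?_
      exact congrFun (Set.inter_indicator_one (s := A i) (t := A j)) x
    rw [key]; ring
  simp_rw [hptw]
  have hFi : Integrable (fun x => ∑ i ∈ s, ∑ j ∈ s,
      (A i ∩ A j).indicator (fun _ => (1 : ℝ)) x) μ :=
    integrable_finset_sum _ fun i _ =>
      integrable_finset_sum _ fun j _ => hint _ ((hA i).inter (hA j))
  have hGi : Integrable (fun x => ∑ i ∈ s, (A i).indicator (fun _ => (1 : ℝ)) x) μ :=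
    integrable_finset_sum _ fun i _ => hint _ (hA i)
  have hI1 : Integrable (fun x => r ^ 2 * ∑ i ∈ s, ∑ j ∈ s,
      (A i ∩ A j).indicator (fun _ => (1 : ℝ)) x) μ := hFi.const_mul _
  have hI2 : Integrable (fun x => (2 * c * r) * ∑ i ∈ s,
      (A i).indicator (fun _ => (1 : ℝ)) x) μ := hGi.const_mul _
  have hI12 : Integrable (fun x => r ^ 2 * ∑ i ∈ s, ∑ j ∈ s,
      (A i ∩ A j).indicator (fun _ => (1 : ℝ)) x
        - (2 * c * r) * ∑ i ∈ s, (A i).indicator (fun _ => (1 : ℝ)) x) μ := hI1.sub hI2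
  rw [integral_add hI12 (integrable_const _), integral_sub hI1 hI2,
    integral_const_mul, integral_const_mul, integral_const]
  have I1 : ∫ x, ∑ i ∈ s, ∑ j ∈ s, (A i ∩ A j).indicator (fun _ => (1 : ℝ)) x ∂μ
      = ∑ i ∈ s, ∑ j ∈ s, (μ (A i ∩ A j)).toReal := by
    rw [integral_finset_sum _ (fun i _ =>
      integrable_finset_sum _ fun j _ => hint _ ((hA i).inter (hA j)))]
    refine Finset.sum_congr rfl fun i _ => ?_
    rw [integral_finset_sum _ (fun j _ => hint _ ((hA i).inter (hA j)))]
    refine Finset.sum_congr rfl fun j _ => ?_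
    rw [integral_indicator_const (1 : ℝ) ((hA i).inter (hA j)), smul_eq_mul, mul_one]
    rfl
  have I2 : ∫ x, ∑ i ∈ s, (A i).indicator (fun _ => (1 : ℝ)) x ∂μ
      = ∑ i ∈ s, (μ (A i)).toReal := by
    rw [integral_finset_sum _ (fun i _ => hint _ (hA i))]
    refine Finset.sum_congr rfl fun i _ => ?_
    rw [integral_indicator_const (1 : ℝ) (hA i), smul_eq_mul, mul_one]
    rfl
  rw [I1, I2]
  simp [measure_univ]

/-- The indicator-function case of Proposition 3.3: for `g = χ_{E₁}` the quantity
`∫ |(Xₙ − ν)g|² dμₙ` equals the displayed sum formula and tends to `0`. -/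
theorem stmt_18 {E : Type*} [MetricSpace E] [TopologicalSpace.SeparableSpace E]
    [MeasurableSpace E] [BorelSpace E]
    (μ ν : Measure E) [IsProbabilityMeasure μ]
    (S : E → E) (hS : Measurable S)
    (h1 : ∀ A : Set E, MeasurableSet A →
      Tendsto (fun k : ℕ => ⨆ i : ℕ,
        |(μ (S^[i] ⁻¹' A ∩ S^[k] ⁻¹' (S^[i] ⁻¹' A))).toReal -
          (μ (S^[i] ⁻¹' A)).toReal * (μ (S^[k] ⁻¹' (S^[i] ⁻¹' A))).toReal|)
        atTop (nhds 0))
    (h2 : ∀ A : Set E, MeasurableSet A →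
      Tendsto (fun k : ℕ => μ (S^[k] ⁻¹' A)) atTop (nhds (ν A)))
    (μn : ∀ n : ℕ, Measure (Fin n → E))
    (hμn : ∀ n, ∀ A : Set (Fin n → E), MeasurableSet A →
      μn n A = μ {x : E | (fun i : Fin n => S^[(i : ℕ) + 1] x) ∈ A})
    (E₁ : Set E) (hE₁ : MeasurableSet E₁) :
    (∀ n : ℕ,
      ∫ x : Fin n → E,
          |(1 / (n : ℝ)) * ∑ i : Fin n, E₁.indicator (fun _ => (1 : ℝ)) (x i) -
            (ν E₁).toReal| ^ 2 ∂μn n =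
        (2 / (n : ℝ) ^ 2) * ∑ i ∈ Finset.Icc 1 n, ∑ j ∈ Finset.Ioc i n,
            (μ (S^[i] ⁻¹' E₁ ∩ S^[j] ⁻¹' E₁)).toReal
          + (1 / (n : ℝ) ^ 2) * ∑ i ∈ Finset.Icc 1 n, (μ (S^[i] ⁻¹' E₁)).toReal
          - (2 * (ν E₁).toReal / (n : ℝ)) * ∑ i ∈ Finset.Icc 1 n, (μ (S^[i] ⁻¹' E₁)).toReal
          + (ν E₁).toReal ^ 2) ∧
    Tendsto (fun n : ℕ =>
        ∫ x : Fin n → E,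
          |(1 / (n : ℝ)) * ∑ i : Fin n, E₁.indicator (fun _ => (1 : ℝ)) (x i) -
            (ν E₁).toReal| ^ 2 ∂μn n)
      atTop (nhds 0) := by
  set c : ℝ := (ν E₁).toReal with hc
  set a : ℕ → ℝ := fun k => (μ (S^[k] ⁻¹' E₁)).toReal with ha_def
  set m : ℕ → ℕ → ℝ := fun i j => (μ (S^[i] ⁻¹' E₁ ∩ S^[j] ⁻¹' E₁)).toReal with hm_def
  have hA : ∀ i : ℕ, MeasurableSet (S^[i] ⁻¹' E₁) := fun i => (hS.iterate i) hE₁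
  have hle1 : ∀ s : Set E, (μ s).toReal ≤ 1 := fun s => by
    simpa using ENNReal.toReal_mono ENNReal.one_ne_top prob_le_one
  have hge0 : ∀ s : Set E, 0 ≤ (μ s).toReal := fun s => ENNReal.toReal_nonneg
  -- Part 1 : the formula
  have hform : ∀ n : ℕ,
      ∫ x : Fin n → E,
          |(1 / (n : ℝ)) * ∑ i : Fin n, E₁.indicator (fun _ => (1 : ℝ)) (x i) - c| ^ 2 ∂μn n =
        (2 / (n : ℝ) ^ 2) * ∑ i ∈ Finset.Icc 1 n, ∑ j ∈ Finset.Ioc i n, m i j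
          + (1 / (n : ℝ) ^ 2) * ∑ i ∈ Finset.Icc 1 n, a i
          - (2 * c / (n : ℝ)) * ∑ i ∈ Finset.Icc 1 n, a i
          + c ^ 2 := by
    intro n
    have hT : Measurable (fun x : E => fun i : Fin n => S^[(i : ℕ) + 1] x) :=
      measurable_pi_lambda _ fun i => hS.iterate _
    have hmap : μn n = Measure.map (fun x : E => fun i : Fin n => S^[(i : ℕ) + 1] x) μ := by
      ext A hA'
      rw [Measure.map_apply hT hA', hμn n A hA']
      rfl
    have hfm : Measurable (fun x : Fin n → E =>
        |(1 / (n : ℝ)) * ∑ i : Fin n, E₁.indicator (fun _ => (1 : ℝ)) (x i) - c| ^ 2) := by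
      refine Measurable.pow_const (Measurable.abs (Measurable.sub ?_ measurable_const)) 2
      exact Measurable.const_mul
        (Finset.measurable_sum _ fun i _ =>
          (measurable_const.indicator hE₁).comp (measurable_pi_apply i)) _
    rw [hmap, integral_map hT.aemeasurable hfm.aestronglyMeasurable]
    have hpt : ∀ x : E,
        |(1 / (n : ℝ)) * ∑ i : Fin n, E₁.indicator (fun _ => (1 : ℝ)) (S^[(i : ℕ) + 1] x) - c| ^ 2
          = ((1 / (n : ℝ)) * ∑ i ∈ Finset.Icc 1 n,
              (S^[i] ⁻¹' E₁).indicator (fun _ => (1 : ℝ)) x - c) ^ 2 := by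
      intro x
      rw [sq_abs,
        show (∑ i : Fin n, E₁.indicator (fun _ => (1 : ℝ)) (S^[(i : ℕ) + 1] x))
            = ∑ i ∈ Finset.Icc 1 n, (S^[i] ⁻¹' E₁).indicator (fun _ => (1 : ℝ)) x from
          fin_sum_shift_aux (fun k => (S^[k] ⁻¹' E₁).indicator (fun _ => (1 : ℝ)) x) n]
    have heq : ∫ x : E,
        |(1 / (n : ℝ)) * ∑ i : Fin n, E₁.indicator (fun _ => (1 : ℝ)) (S^[(i : ℕ) + 1] x) - c| ^ 2 ∂μ
          = ∫ x : E, ((1 / (n : ℝ)) * ∑ i ∈ Finset.Icc 1 n,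
              (S^[i] ⁻¹' E₁).indicator (fun _ => (1 : ℝ)) x - c) ^ 2 ∂μ :=
      integral_congr_ae (Eventually.of_forall hpt)
    refine heq.trans ?_
    rw [integral_sq_sum_aux μ (Finset.Icc 1 n) (fun i => S^[i] ⁻¹' E₁) hA (1 / n) c]
    have hsym : ∀ i j, m i j = m j i := fun i j => by
      simp only [hm_def, Set.inter_comm]
    rw [split_sum_aux n m hsym]
    have hdiag : ∑ i ∈ Finset.Icc 1 n, m i i = ∑ i ∈ Finset.Icc 1 n, a i :=
      Finset.sum_congr rfl fun i _ => by simp [hm_def, ha_def, Set.inter_self]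
    rw [hdiag]
    ring
  -- the three pieces
  set t1 : ℕ → ℝ := fun n =>
    (2 / (n : ℝ) ^ 2) * ∑ i ∈ Finset.Icc 1 n, ∑ j ∈ Finset.Ioc i n, (m i j - a i * a j)
    with ht1_def
  set t2 : ℕ → ℝ := fun n =>
    (1 / (n : ℝ) ^ 2) * ∑ i ∈ Finset.Icc 1 n, (a i - a i * a i) with ht2_def
  set t3 : ℕ → ℝ := fun n =>
    (((n : ℝ))⁻¹ * ∑ i ∈ Finset.range n, a (i + 1) - c) ^ 2 with ht3_def
  have hdecomp : ∀ n : ℕ,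
      (2 / (n : ℝ) ^ 2) * ∑ i ∈ Finset.Icc 1 n, ∑ j ∈ Finset.Ioc i n, m i j
          + (1 / (n : ℝ) ^ 2) * ∑ i ∈ Finset.Icc 1 n, a i
          - (2 * c / (n : ℝ)) * ∑ i ∈ Finset.Icc 1 n, a i
          + c ^ 2 = t1 n + t2 n + t3 n := by
    intro n
    have hsq : (∑ i ∈ Finset.Icc 1 n, a i) * (∑ j ∈ Finset.Icc 1 n, a j)
        = ∑ i ∈ Finset.Icc 1 n, a i * a i
          + 2 * ∑ i ∈ Finset.Icc 1 n, ∑ j ∈ Finset.Ioc i n, a i * a j := by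
      rw [Finset.sum_mul_sum]
      exact split_sum_aux n (fun i j => a i * a j) (fun i j => mul_comm _ _)
    simp only [ht1_def, ht2_def, ht3_def, ← sum_shift_aux a n, Finset.sum_sub_distrib]
    linear_combination (-(1 / (n : ℝ) ^ 2)) * hsq
  -- limit of a
  have hν_ne : ν E₁ ≠ ⊤ := by
    have hle : ν E₁ ≤ 1 :=
      le_of_tendsto (h2 E₁ hE₁) (Eventually.of_forall fun k => prob_le_one)
    exact ne_top_of_le_ne_top ENNReal.one_ne_top hle
  have ha_tendsto : Tendsto a atTop (nhds c) := by
    have := (ENNReal.tendsto_toReal hν_ne).comp (h2 E₁ hE₁)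
    exact this
  -- the sup sequence
  set b : ℕ → ℝ := fun k => ⨆ i : ℕ,
      |(μ (S^[i] ⁻¹' E₁ ∩ S^[k] ⁻¹' (S^[i] ⁻¹' E₁))).toReal -
        (μ (S^[i] ⁻¹' E₁)).toReal * (μ (S^[k] ⁻¹' (S^[i] ⁻¹' E₁))).toReal| with hb_def
  have hb_tendsto : Tendsto b atTop (nhds 0) := h1 E₁ hE₁
  have hBdd : ∀ k : ℕ, BddAbove (Set.range fun i : ℕ =>
      |(μ (S^[i] ⁻¹' E₁ ∩ S^[k] ⁻¹' (S^[i] ⁻¹' E₁))).toReal -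
        (μ (S^[i] ⁻¹' E₁)).toReal * (μ (S^[k] ⁻¹' (S^[i] ⁻¹' E₁))).toReal|) := by
    intro k
    refine ⟨2, ?_⟩
    rintro y ⟨i, rfl⟩
    have p1 := hle1 (S^[i] ⁻¹' E₁ ∩ S^[k] ⁻¹' (S^[i] ⁻¹' E₁))
    have p2 := hle1 (S^[i] ⁻¹' E₁)
    have p3 := hle1 (S^[k] ⁻¹' (S^[i] ⁻¹' E₁))
    have q1 := hge0 (S^[i] ⁻¹' E₁ ∩ S^[k] ⁻¹' (S^[i] ⁻¹' E₁))
    have q2 := hge0 (S^[i] ⁻¹' E₁)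
    have q3 := hge0 (S^[k] ⁻¹' (S^[i] ⁻¹' E₁))
    exact abs_le.mpr ⟨by nlinarith, by nlinarith⟩
  have hb0 : ∀ k, 0 ≤ b k := fun k =>
    le_trans (abs_nonneg _) (le_ciSup (hBdd k) 0)
  have hgap : ∀ i k : ℕ, |m i (i + k) - a i * a (i + k)| ≤ b k := by
    intro i k
    have hset : S^[i + k] ⁻¹' E₁ = S^[k] ⁻¹' (S^[i] ⁻¹' E₁) := by
      rw [Function.iterate_add S i k, Set.preimage_comp]
    have : m i (i + k) - a i * a (i + k)
        = (μ (S^[i] ⁻¹' E₁ ∩ S^[k] ⁻¹' (S^[i] ⁻¹' E₁))).toReal -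
            (μ (S^[i] ⁻¹' E₁)).toReal * (μ (S^[k] ⁻¹' (S^[i] ⁻¹' E₁))).toReal := by
      simp only [hm_def, ha_def, hset]
    rw [this]
    exact le_ciSup (hBdd k) i
  -- convergence of t3
  have ht3_lim : Tendsto t3 atTop (nhds 0) := by
    have hca : Tendsto (fun k => a (k + 1)) atTop (nhds c) :=
      ha_tendsto.comp (tendsto_add_atTop_nat 1)
    have := (hca.cesaro.sub (tendsto_const_nhds (x := c))).pow 2
    simpa [ht3_def] using this
  -- convergence of t2
  have ht2_lim : Tendsto t2 atTop (nhds 0) := by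
    refine squeeze_zero_norm (fun n => ?_) tendsto_inv_atTop_nhds_zero_nat
    rcases Nat.eq_zero_or_pos n with h0 | hpos
    · subst h0; simp [ht2_def]
    have hn0 : (0 : ℝ) < (n : ℝ) := by exact_mod_cast hpos
    have hbound : |∑ i ∈ Finset.Icc 1 n, (a i - a i * a i)| ≤ (n : ℝ) := by
      calc |∑ i ∈ Finset.Icc 1 n, (a i - a i * a i)|
          ≤ ∑ i ∈ Finset.Icc 1 n, |a i - a i * a i| := Finset.abs_sum_le_sum_abs _ _
        _ ≤ ∑ i ∈ Finset.Icc 1 n, 1 := by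
            refine Finset.sum_le_sum fun i _ => ?_
            have q := hge0 (S^[i] ⁻¹' E₁)
            have p := hle1 (S^[i] ⁻¹' E₁)
            exact abs_le.mpr ⟨by nlinarith, by nlinarith⟩
        _ = (n : ℝ) := by simp [Nat.card_Icc]
    calc ‖t2 n‖ = (1 / (n : ℝ) ^ 2) * |∑ i ∈ Finset.Icc 1 n, (a i - a i * a i)| := by
          rw [Real.norm_eq_abs, ht2_def, abs_mul, abs_of_nonneg (by positivity)]
      _ ≤ (1 / (n : ℝ) ^ 2) * (n : ℝ) := by
          exact mul_le_mul_of_nonneg_left hbound (by positivity)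
      _ = (n : ℝ)⁻¹ := by field_simp
  -- convergence of t1
  have ht1_lim : Tendsto t1 atTop (nhds 0) := by
    have hg : Tendsto (fun n : ℕ => 2 * ((n : ℝ)⁻¹ * ∑ k ∈ Finset.range n, b (k + 1)))
        atTop (nhds 0) := by
      have := ((hb_tendsto.comp (tendsto_add_atTop_nat 1)).cesaro).const_mul 2
      simpa using this
    refine squeeze_zero_norm (fun n => ?_) hg
    rcases Nat.eq_zero_or_pos n with h0 | hpos
    · subst h0; simp [ht1_def]
    have hn0 : (0 : ℝ) < (n : ℝ) := by exact_mod_cast hpos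
    set B : ℝ := ∑ k ∈ Finset.range n, b (k + 1) with hB_def
    have hinner : ∀ i ∈ Finset.Icc 1 n,
        |∑ j ∈ Finset.Ioc i n, (m i j - a i * a j)| ≤ B := by
      intro i _
      calc |∑ j ∈ Finset.Ioc i n, (m i j - a i * a j)|
          ≤ ∑ j ∈ Finset.Ioc i n, |m i j - a i * a j| := Finset.abs_sum_le_sum_abs _ _
        _ ≤ ∑ j ∈ Finset.Ioc i n, b (j - i) := by
            refine Finset.sum_le_sum fun j hj => ?_
            have hij := (Finset.mem_Ioc.mp hj).1
            have : i + (j - i) = j := by omega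
            simpa [this] using hgap i (j - i)
        _ = ∑ k ∈ (Finset.Ioc i n).image (fun j => j - i - 1), b (k + 1) := by
            rw [Finset.sum_image (by
              intro x hx y hy hxy
              have h1' := Finset.mem_Ioc.mp hx
              have h2' := Finset.mem_Ioc.mp hy
              simp only at hxy
              omega)]
            refine Finset.sum_congr rfl fun j hj => ?_
            have := Finset.mem_Ioc.mp hj
            congr 1
            omega
        _ ≤ B := by
            refine Finset.sum_le_sum_of_subset_of_nonneg ?_ (fun k _ _ => hb0 _)
            intro k hk
            simp only [Finset.mem_image, Finset.mem_Ioc] at hk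
            obtain ⟨j, ⟨hij, hjn⟩, rfl⟩ := hk
            exact Finset.mem_range.mpr (by omega)
    have hB0 : 0 ≤ B := Finset.sum_nonneg fun k _ => hb0 _
    calc ‖t1 n‖ = (2 / (n : ℝ) ^ 2) *
          |∑ i ∈ Finset.Icc 1 n, ∑ j ∈ Finset.Ioc i n, (m i j - a i * a j)| := by
          rw [Real.norm_eq_abs, ht1_def, abs_mul, abs_of_nonneg (by positivity)]
      _ ≤ (2 / (n : ℝ) ^ 2) * ∑ i ∈ Finset.Icc 1 n,
            |∑ j ∈ Finset.Ioc i n, (m i j - a i * a j)| :=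
          mul_le_mul_of_nonneg_left (Finset.abs_sum_le_sum_abs _ _) (by positivity)
      _ ≤ (2 / (n : ℝ) ^ 2) * ∑ i ∈ Finset.Icc 1 n, B :=
          mul_le_mul_of_nonneg_left (Finset.sum_le_sum hinner) (by positivity)
      _ = (2 / (n : ℝ) ^ 2) * ((n : ℝ) * B) := by
          rw [Finset.sum_const, Nat.card_Icc]
          simp [nsmul_eq_mul]
      _ = 2 * ((n : ℝ)⁻¹ * B) := by field_simp
  refine ⟨hform, ?_⟩
  rw [tendsto_congr fun n => (hform n).trans (hdecomp n)]
  have := (ht1_lim.add ht2_lim).add ht3_lim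
  simpa using this
end
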